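/- LTL and self-loop alternating automata with alphabets of the form 2^{AP'} have the same expressive power: for every LTL formula φ there exists an SLAA A over the alphabet 2^{AP(φ)} with L(A) = L(φ), and for every SLAA A over an alphabet 2^{AP'} there exists an LTL formula φ over AP' with L(φ) = L(A). -/

import Mathlib

set_option maxHeartbeats 1000000

namespace SLAA

/-- Shift an infinite word: `shift u i` is the suffix `u[i..]`. -/
def shift {α : Type} (u : ℕ → α) (i : ℕ) : ℕ → α := fun k => u (k + i)

/-- LTL formulae in positive normal form over atomic propositions `AP`
(`ev` is the eventually operator F, `alw` is the always operator G). -/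
inductive LTL (AP : Type) : Type
  | tt : LTL AP
  | ff : LTL AP
  | atom (a : AP) : LTL AP
  | natom (a : AP) : LTL AP
  | or (φ ψ : LTL AP) : LTL AP
  | and (φ ψ : LTL AP) : LTL AP
  | next (φ : LTL AP) : LTL AP
  | untl (φ ψ : LTL AP) : LTL AP
  | rels (φ ψ : LTL AP) : LTL AP
  | ev (φ : LTL AP) : LTL AP
  | alw (φ : LTL AP) : LTL AP

namespace LTL
variable {AP : Type}

/-- Satisfaction of an LTL formula by an infinite word `u : ℕ → Set AP`. -/
def Sat : (ℕ → Set AP) → LTL AP → Prop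
  | _, .tt => True
  | _, .ff => False
  | u, .atom a => a ∈ u 0
  | u, .natom a => a ∉ u 0
  | u, .or φ ψ => Sat u φ ∨ Sat u ψ
  | u, .and φ ψ => Sat u φ ∧ Sat u ψ
  | u, .next φ => Sat (shift u 1) φ
  | u, .untl φ ψ => ∃ i, Sat (shift u i) ψ ∧ ∀ j < i, Sat (shift u j) φ
  | u, .rels φ ψ =>
      (∃ i, Sat (shift u i) φ ∧ ∀ j ≤ i, Sat (shift u j) ψ) ∨ ∀ i, Sat (shift u i) ψ
  | u, .ev φ => ∃ i, Sat (shift u i) φ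
  | u, .alw φ => ∀ i, Sat (shift u i) φ

/-- The set of atomic propositions occurring in a formula. -/
def apSet : LTL AP → Set AP
  | .tt | .ff => ∅
  | .atom a | .natom a => {a}
  | .or φ ψ | .and φ ψ | .untl φ ψ | .rels φ ψ => φ.apSet ∪ ψ.apSet
  | .next φ | .ev φ | .alw φ => φ.apSet

/-- The size of a formula (number of its subformula occurrences). -/
def size : LTL AP → ℕ
  | .tt | .ff | .atom _ | .natom _ => 1
  | .or φ ψ | .and φ ψ | .untl φ ψ | .rels φ ψ => φ.size + ψ.size + 1
  | .next φ | .ev φ | .alw φ => φ.size + 1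

/-- The list of subformulae of a formula (with multiplicities). -/
def subs : LTL AP → List (LTL AP)
  | .tt => [.tt]
  | .ff => [.ff]
  | .atom a => [.atom a]
  | .natom a => [.natom a]
  | .or φ ψ => .or φ ψ :: (φ.subs ++ ψ.subs)
  | .and φ ψ => .and φ ψ :: (φ.subs ++ ψ.subs)
  | .next φ => .next φ :: φ.subs
  | .untl φ ψ => .untl φ ψ :: (φ.subs ++ ψ.subs)
  | .rels φ ψ => .rels φ ψ :: (φ.subs ++ ψ.subs)
  | .ev φ => .ev φ :: φ.subs
  | .alw φ => .alw φ :: φ.subs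

/-- The set of subformulae of a formula. -/
def subsSet (φ : LTL AP) : Set (LTL AP) := {ψ | ψ ∈ φ.subs}

/-- A temporal formula: the topmost operator is neither `∧` nor `∨`. -/
def IsTemporal : LTL AP → Prop
  | .or _ _ => False
  | .and _ _ => False
  | _ => True

/-- A state formula: no temporal operator occurs in it. -/
def IsState : LTL AP → Prop
  | .tt | .ff | .atom _ | .natom _ => True
  | .or φ ψ | .and φ ψ => φ.IsState ∧ ψ.IsState
  | .next _ | .untl _ _ | .rels _ _ | .ev _ | .alw _ => False

/-- Test whether a formula is an `U`-formula. -/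
def isU : LTL AP → Bool
  | .untl _ _ => true
  | _ => false

/-- Test whether a formula is an `F`-formula. -/
def isEv : LTL AP → Bool
  | .ev _ => true
  | _ => false

/-- The disjunctive decomposition `ψ̄` of a formula, as a list of disjuncts,
each disjunct being a set of (temporal) formulae whose conjunction it stands for. -/
def dnfList : LTL AP → List (Set (LTL AP))
  | .or φ ψ => φ.dnfList ++ ψ.dnfList
  | .and φ ψ => φ.dnfList.flatMap (fun K₁ => ψ.dnfList.map (fun K₂ => K₁ ∪ K₂))
  | χ => [{χ}]

/-- The top-level conjuncts of a formula. -/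
def conjuncts : LTL AP → Set (LTL AP)
  | .and φ ψ => φ.conjuncts ∪ ψ.conjuncts
  | χ => {χ}

/-- The language of an LTL formula: all words over the alphabet `2^{AP(φ)}`
satisfying `φ`. -/
def Lang (φ : LTL AP) : Set (ℕ → Set AP) :=
  {u | (∀ i, u i ⊆ φ.apSet) ∧ φ.Sat u}

end LTL

/-- A transition of an alternating automaton: a source state, a letter,
a set of acceptance marks, and a destination configuration. -/
structure Trans (St Λ Mk : Type) where
  src : St
  lab : Λ
  marks : Set Mk
  dest : Set St

/-- Acceptance formulae: positive boolean combinations of `Fin m` and `Inf m`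
terms (with boolean constants). -/
inductive AccFormula (Mk : Type) : Type
  | tt : AccFormula Mk
  | ff : AccFormula Mk
  | fin (m : Mk) : AccFormula Mk
  | inf (m : Mk) : AccFormula Mk
  | and (φ ψ : AccFormula Mk) : AccFormula Mk
  | or (φ ψ : AccFormula Mk) : AccFormula Mk

namespace AccFormula
variable {Mk : Type}

/-- Satisfaction of an acceptance formula, given the set `I` of marks that
occur infinitely often. -/
def Sat (I : Set Mk) : AccFormula Mk → Prop
  | .tt => True
  | .ff => False
  | .fin m => m ∉ I
  | .inf m => m ∈ I
  | .and φ ψ => Sat I φ ∧ Sat I ψ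
  | .or φ ψ => Sat I φ ∨ Sat I ψ

/-- Marks occurring in `Fin` terms. -/
def finMarkSet : AccFormula Mk → Set Mk
  | .fin m => {m}
  | .and φ ψ | .or φ ψ => φ.finMarkSet ∪ ψ.finMarkSet
  | _ => ∅

/-- Marks occurring in `Inf` terms. -/
def infMarkSet : AccFormula Mk → Set Mk
  | .inf m => {m}
  | .and φ ψ | .or φ ψ => φ.infMarkSet ∪ ψ.infMarkSet
  | _ => ∅

/-- An acceptance formula is Inf-less if it contains no `Inf` terms. -/
def InfLess (Φ : AccFormula Mk) : Prop := Φ.infMarkSet = ∅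

end AccFormula

/-- A `Fin`/`Inf` term of an acceptance formula. -/
inductive AccTerm (Mk : Type) : Type
  | fin (m : Mk) : AccTerm Mk
  | inf (m : Mk) : AccTerm Mk

namespace AccFormula
variable {Mk : Type}

/-- The set of terms of an acceptance formula. -/
def terms : AccFormula Mk → Set (AccTerm Mk)
  | .fin m => {.fin m}
  | .inf m => {.inf m}
  | .and φ ψ | .or φ ψ => φ.terms ∪ ψ.terms
  | _ => ∅

/-- Evaluation of an acceptance formula where exactly the terms in `O` are true. -/
def evalTerms (O : Set (AccTerm Mk)) : AccFormula Mk → Prop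
  | .tt => True
  | .ff => False
  | .fin m => AccTerm.fin m ∈ O
  | .inf m => AccTerm.inf m ∈ O
  | .and φ ψ => evalTerms O φ ∧ evalTerms O ψ
  | .or φ ψ => evalTerms O φ ∨ evalTerms O ψ

/-- Minimal models of an acceptance formula: subsets of its terms satisfying it,
no proper subset of which satisfies it. -/
def MinModels (Φ : AccFormula Mk) : Set (Set (AccTerm Mk)) :=
  {O | O ⊆ Φ.terms ∧ Φ.evalTerms O ∧ ∀ O' ⊂ O, ¬ Φ.evalTerms O'}

end AccFormula

/-- `Fin`-marks of a model. -/
def finOf {Mk : Type} (O : Set (AccTerm Mk)) : Set Mk := {m | AccTerm.fin m ∈ O}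

/-- `Inf`-marks of a model. -/
def infOf {Mk : Type} (O : Set (AccTerm Mk)) : Set Mk := {m | AccTerm.inf m ∈ O}

/-- An alternating automaton with transition-based Emerson-Lei acceptance. -/
structure AltAutomaton (St Λ Mk : Type) where
  states : Set St
  alphabet : Set Λ
  marks : Set Mk
  delta : Set (Trans St Λ Mk)
  init : St
  acc : AccFormula Mk

variable {St Λ Mk : Type}

/-- Well-formedness of an alternating automaton: finiteness of the state set,
alphabet and mark set, and typing of the transition relation and acceptance
formula. -/
def AltAutomaton.WellFormed (A : AltAutomaton St Λ Mk) : Prop :=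
  A.states.Finite ∧ A.alphabet.Finite ∧ A.marks.Finite ∧ A.init ∈ A.states ∧
  (∀ t ∈ A.delta, t.src ∈ A.states ∧ t.lab ∈ A.alphabet ∧
      t.marks ⊆ A.marks ∧ t.dest ⊆ A.states) ∧
  A.acc.finMarkSet ∪ A.acc.infMarkSet ⊆ A.marks

/-- A self-loop alternating automaton: some partial order puts every
destination state of a transition below its source. -/
def AltAutomaton.IsSLAA (A : AltAutomaton St Λ Mk) : Prop :=
  ∃ le : St → St → Prop, IsPartialOrder St le ∧
    ∀ t ∈ A.delta, ∀ s ∈ t.dest, le s t.src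

/-- `T` is a multitransition under the letter `α`. -/
def IsMulti (T : Set (Trans St Λ Mk)) (α : Λ) : Prop :=
  (∀ t ∈ T, t.lab = α) ∧
  ∀ t₁ ∈ T, ∀ t₂ ∈ T, t₁.src = t₂.src → t₁ = t₂

/-- Source configuration of a multitransition. -/
def mdom (T : Set (Trans St Λ Mk)) : Set St := {s | ∃ t ∈ T, t.src = s}

/-- Destination configuration of a multitransition. -/
def mrange (T : Set (Trans St Λ Mk)) : Set St := {s | ∃ t ∈ T, s ∈ t.dest}

/-- Restriction of a multitransition to transitions whose source lies in `C`. -/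
def restrict (T : Set (Trans St Λ Mk)) (C : Set St) : Set (Trans St Λ Mk) :=
  {t | t ∈ T ∧ t.src ∈ C}

/-- A transition in `T` carries the mark `m`. -/
def markedBy (T : Set (Trans St Λ Mk)) (m : Mk) : Prop := ∃ t ∈ T, m ∈ t.marks

/-- `T` is `s`-escaping: it contains a non-looping transition with source `s`. -/
def escaping (T : Set (Trans St Λ Mk)) (s : St) : Prop :=
  ∃ t ∈ T, t.src = s ∧ s ∉ t.dest

/-- `ρ` is a run of `A` over the word `u`. -/
def AltAutomaton.IsRun (A : AltAutomaton St Λ Mk) (u : ℕ → Λ)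
    (ρ : ℕ → Set (Trans St Λ Mk)) : Prop :=
  mdom (ρ 0) = {A.init} ∧
  ∀ i, ρ i ⊆ A.delta ∧ IsMulti (ρ i) (u i) ∧ mrange (ρ i) = mdom (ρ (i + 1))

/-- An infinite branch of a sequence of multitransitions: at every level `i`
it follows a transition of `ρ i`, starting at level 0. -/
def IsInfBranch (ρ : ℕ → Set (Trans St Λ Mk)) (b : ℕ → Trans St Λ Mk) : Prop :=
  ∀ i, b i ∈ ρ i ∧ (b (i + 1)).src ∈ (b i).dest

/-- The set `M(b)` of marks occurring infinitely often along a branch. -/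
def infMarks (b : ℕ → Trans St Λ Mk) : Set Mk :=
  {m | ∀ N, ∃ i, N ≤ i ∧ m ∈ (b i).marks}

/-- An accepting run: a run all of whose infinite branches satisfy the
acceptance formula. -/
def AltAutomaton.IsAccRun (A : AltAutomaton St Λ Mk) (u : ℕ → Λ)
    (ρ : ℕ → Set (Trans St Λ Mk)) : Prop :=
  A.IsRun u ρ ∧ ∀ b, IsInfBranch ρ b → A.acc.Sat (infMarks b)

/-- The language of an alternating automaton. -/
def AltAutomaton.Lang (A : AltAutomaton St Λ Mk) : Set (ℕ → Λ) :=
  {u | (∀ i, u i ∈ A.alphabet) ∧ ∃ ρ, A.IsAccRun u ρ}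

/-- Product of two sets of (marks, configuration) pairs. -/
def otimes {Mk St : Type} (P Q : Set (Set Mk × Set St)) : Set (Set Mk × Set St) :=
  {r | ∃ p ∈ P, ∃ q ∈ Q, r = (p.1 ∪ q.1, p.2 ∪ q.2)}

/-- Marks eraser. -/
def me {Mk St : Type} (P : Set (Set Mk × Set St)) : Set (Set Mk × Set St) :=
  {r | ∃ p ∈ P, r = ((∅ : Set Mk), p.2)}

/-- The transition function of the basic translation (with a single co-Büchi
mark `()`); `F ψ` is handled as `tt U ψ` and `G ψ` as `ff R ψ`. -/
def basicDelta {AP : Type} : LTL AP → Set AP → Set (Set Unit × Set (LTL AP))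
  | .tt, _ => {((∅ : Set Unit), (∅ : Set (LTL AP)))}
  | .ff, _ => ∅
  | .atom a, α => {p | p = ((∅ : Set Unit), (∅ : Set (LTL AP))) ∧ a ∈ α}
  | .natom a, α => {p | p = ((∅ : Set Unit), (∅ : Set (LTL AP))) ∧ a ∉ α}
  | .and φ ψ, α => me (otimes (basicDelta φ α) (basicDelta ψ α))
  | .or φ ψ, α => me (basicDelta φ α ∪ basicDelta ψ α)
  | .next φ, _ => {((∅ : Set Unit), ({φ} : Set (LTL AP)))}
  | .untl φ ψ, α =>
      me (basicDelta ψ α) ∪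
        otimes {(({()} : Set Unit), ({LTL.untl φ ψ} : Set (LTL AP)))} (me (basicDelta φ α))
  | .ev ψ, α =>
      me (basicDelta ψ α) ∪
        otimes {(({()} : Set Unit), ({LTL.ev ψ} : Set (LTL AP)))}
          (me {((∅ : Set Unit), (∅ : Set (LTL AP)))})
  | .rels φ ψ, α =>
      me (otimes (basicDelta φ α) (basicDelta ψ α)) ∪
        me (otimes {((∅ : Set Unit), ({LTL.rels φ ψ} : Set (LTL AP)))} (basicDelta ψ α))
  | .alw ψ, α =>
      me (otimes (∅ : Set (Set Unit × Set (LTL AP))) (basicDelta ψ α)) ∪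
        me (otimes {((∅ : Set Unit), ({LTL.alw ψ} : Set (LTL AP)))} (basicDelta ψ α))

/-- Product over a set `K` of formulae, given a transition set `d χ` for each
formula `χ`. -/
def setOtimes {AP Mk : Type} (d : LTL AP → Set (Set Mk × Set (LTL AP)))
    (K : Set (LTL AP)) : Set (Set Mk × Set (LTL AP)) :=
  {r | ∃ f : LTL AP → Set Mk × Set (LTL AP), (∀ χ ∈ K, f χ ∈ d χ) ∧
        r = (⋃ χ ∈ K, (f χ).1, ⋃ χ ∈ K, (f χ).2)}

/-- `Δ(ψ_K, α)` where `ψ_K` is the conjunction of all formulae in `K`: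
for a singleton `K = {χ}` it is `Δ(χ, α)`, otherwise the `∧`-rule erases
the marks of the product. -/
def conjDelta {AP Mk : Type} (d : LTL AP → Set (Set Mk × Set (LTL AP)))
    (K : Set (LTL AP)) : Set (Set Mk × Set (LTL AP)) :=
  {r | (∃ χ, K = {χ} ∧ r ∈ d χ) ∨ ((¬ ∃ χ, K = {χ}) ∧ r ∈ me (setOtimes d K))}

/-- Looping transitions of `ψ_K` (destination subsumes `K`), with `K` removed
from the destination. -/
def deltaL {AP Mk : Type} (d : LTL AP → Set (Set Mk × Set (LTL AP)))
    (K : Set (LTL AP)) : Set (Set Mk × Set (LTL AP)) :=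
  {r | ∃ p ∈ conjDelta d K, K ⊆ p.2 ∧ r = (p.1, p.2 \ K)}

/-- Non-looping transitions of `ψ_K`. -/
def deltaNL {AP Mk : Type} (d : LTL AP → Set (Set Mk × Set (LTL AP)))
    (K : Set (LTL AP)) : Set (Set Mk × Set (LTL AP)) :=
  {p | p ∈ conjDelta d K ∧ ¬ K ⊆ p.2}

/-- Acceptance marks of the F-merging translation: the co-Büchi mark and the
orange marks `o^K_{Fψ}`. -/
inductive FMark (AP : Type) : Type
  | base : FMark AP
  | orange (ψ : LTL AP) (K : Set (LTL AP)) : FMark AP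

/-- The set of orange marks `M_K = {o^{K'}_{Fψ} | K' ∈ ψ̄, K' ≠ K}`. -/
def fMK {AP : Type} (ψ : LTL AP) (K : Set (LTL AP)) : Set (FMark AP) :=
  {m | ∃ K', K' ∈ ψ.dnfList ∧ K' ≠ K ∧ m = FMark.orange ψ K'}

/-- The transition function of the F-merging translation. -/
def fmergeDelta {AP : Type} : LTL AP → Set AP → Set (Set (FMark AP) × Set (LTL AP))
  | .tt, _ => {((∅ : Set (FMark AP)), (∅ : Set (LTL AP)))}
  | .ff, _ => ∅
  | .atom a, α => {p | p = ((∅ : Set (FMark AP)), (∅ : Set (LTL AP))) ∧ a ∈ α}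
  | .natom a, α => {p | p = ((∅ : Set (FMark AP)), (∅ : Set (LTL AP))) ∧ a ∉ α}
  | .and φ ψ, α => me (otimes (fmergeDelta φ α) (fmergeDelta ψ α))
  | .or φ ψ, α => me (fmergeDelta φ α ∪ fmergeDelta ψ α)
  | .next φ, _ => {((∅ : Set (FMark AP)), ({φ} : Set (LTL AP)))}
  | .untl φ ψ, α =>
      me (fmergeDelta ψ α) ∪
        otimes {(({FMark.base} : Set (FMark AP)), ({LTL.untl φ ψ} : Set (LTL AP)))}
          (me (fmergeDelta φ α))
  | .rels φ ψ, α =>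
      me (otimes (fmergeDelta φ α) (fmergeDelta ψ α)) ∪
        me (otimes {((∅ : Set (FMark AP)), ({LTL.rels φ ψ} : Set (LTL AP)))} (fmergeDelta ψ α))
  | .alw ψ, α =>
      me (otimes (∅ : Set (Set (FMark AP) × Set (LTL AP))) (fmergeDelta ψ α)) ∪
        me (otimes {((∅ : Set (FMark AP)), ({LTL.alw ψ} : Set (LTL AP)))} (fmergeDelta ψ α))
  | .ev ψ, α =>
      {(({FMark.base} : Set (FMark AP)), ({LTL.ev ψ} : Set (LTL AP)))} ∪
      {r | ∃ K, K ∈ ψ.dnfList ∧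
            (r ∈ me (deltaNL (fun χ => if _h : χ.size ≤ ψ.size then fmergeDelta χ α else ∅) K) ∨
             r ∈ otimes {((fMK ψ K : Set (FMark AP)), ({LTL.ev ψ} : Set (LTL AP)))}
                   (deltaL (fun χ => if _h : χ.size ≤ ψ.size then fmergeDelta χ α else ∅) K))}
termination_by φ _ => φ.size
decreasing_by
  all_goals simp [LTL.size] at *
  all_goals omega

/-- Acceptance marks of the F,G-merging translation: `f ψ` stands for the
mark `f_ψ`, `e ψ` for the escape mark `e_ψ` and `o ψ K` for `o^K_{Fψ}`. -/
inductive FGMark (AP : Type) : Type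
  | f (ψ : LTL AP) : FGMark AP
  | e (ψ : LTL AP) : FGMark AP
  | o (ψ : LTL AP) (K : Set (LTL AP)) : FGMark AP

/-- `M_K = {o^{K'}_{Fψ} | K' ∈ ψ̄, K' ≠ K}` for the F,G-merging translation. -/
def fgMK {AP : Type} (ψ : LTL AP) (K : Set (LTL AP)) : Set (FGMark AP) :=
  {m | ∃ K', K' ∈ ψ.dnfList ∧ K' ≠ K ∧ m = FGMark.o ψ K'}

/-- A formula whose topmost operator is `U` or `F`. -/
def IsUF {AP : Type} : LTL AP → Prop
  | .untl _ _ => True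
  | .ev _ => True
  | _ => False

/-- `Δ'_L`: looping transitions of `ψ'`, with `ψ'` removed from the
destination. -/
def dPrimeL {AP Mk : Type} (d : Set (Set Mk × Set (LTL AP))) (χ : LTL AP) :
    Set (Set Mk × Set (LTL AP)) :=
  {r | ∃ p ∈ d, χ ∈ p.2 ∧ r = (p.1, p.2 \ {χ})}

/-- `Δ'_NL`: non-looping transitions of `ψ'`, marked with the escape mark. -/
def dPrimeNL {AP : Type} (d : Set (Set (FGMark AP) × Set (LTL AP))) (χ : LTL AP) :
    Set (Set (FGMark AP) × Set (LTL AP)) :=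
  {r | ∃ p ∈ d, χ ∉ p.2 ∧ r = (({FGMark.e χ} : Set (FGMark AP)), p.2)}

/-- `Δ'(ψ', α)` used in the `G`-rule of the F,G-merging translation, where
`d = Δ(ψ', α)`. -/
def deltaPrime {AP : Type} (d : Set (Set (FGMark AP) × Set (LTL AP))) (χ : LTL AP) :
    Set (Set (FGMark AP) × Set (LTL AP)) :=
  {r | (IsUF χ ∧ r ∈ dPrimeL d χ ∪ dPrimeNL d χ) ∨
       (¬ IsUF χ ∧ ∃ p ∈ d, r = (p.1, p.2 \ {χ}))}

/-- The transition function of the F,G-merging translation. -/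
def fgDelta {AP : Type} : LTL AP → Set AP → Set (Set (FGMark AP) × Set (LTL AP))
  | .tt, _ => {((∅ : Set (FGMark AP)), (∅ : Set (LTL AP)))}
  | .ff, _ => ∅
  | .atom a, α => {p | p = ((∅ : Set (FGMark AP)), (∅ : Set (LTL AP))) ∧ a ∈ α}
  | .natom a, α => {p | p = ((∅ : Set (FGMark AP)), (∅ : Set (LTL AP))) ∧ a ∉ α}
  | .and φ ψ, α => me (otimes (fgDelta φ α) (fgDelta ψ α))
  | .or φ ψ, α => me (fgDelta φ α ∪ fgDelta ψ α)
  | .next φ, _ => {((∅ : Set (FGMark AP)), ({φ} : Set (LTL AP)))}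
  | .untl φ ψ, α =>
      me (fgDelta ψ α) ∪
        otimes {(({FGMark.f (LTL.untl φ ψ)} : Set (FGMark AP)), ({LTL.untl φ ψ} : Set (LTL AP)))}
          (me (fgDelta φ α))
  | .rels φ ψ, α =>
      me (otimes (fgDelta φ α) (fgDelta ψ α)) ∪
        me (otimes {((∅ : Set (FGMark AP)), ({LTL.rels φ ψ} : Set (LTL AP)))} (fgDelta ψ α))
  | .ev ψ, α =>
      {(({FGMark.f (LTL.ev ψ)} : Set (FGMark AP)), ({LTL.ev ψ} : Set (LTL AP)))} ∪
      {r | ∃ K, K ∈ ψ.dnfList ∧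
            (r ∈ me (deltaNL (fun χ => if _h : χ.size ≤ ψ.size then fgDelta χ α else ∅) K) ∨
             r ∈ otimes {((fgMK ψ K : Set (FGMark AP)), ({LTL.ev ψ} : Set (LTL AP)))}
                   (deltaL (fun χ => if _h : χ.size ≤ ψ.size then fgDelta χ α else ∅) K))}
  | .alw ψ, α =>
      {r | ((∀ χ ∈ ψ.conjuncts, χ.IsTemporal ∨ χ.IsState) ∧
              r ∈ otimes {((∅ : Set (FGMark AP)), ({LTL.alw ψ} : Set (LTL AP)))}
                    (setOtimes
                      (fun χ => deltaPrime (if _h : χ.size ≤ ψ.size then fgDelta χ α else ∅) χ)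
                      ψ.conjuncts)) ∨
           ((¬ ∀ χ ∈ ψ.conjuncts, χ.IsTemporal ∨ χ.IsState) ∧
              r ∈ me (otimes (∅ : Set (Set (FGMark AP) × Set (LTL AP))) (fgDelta ψ α)) ∪
                  me (otimes {((∅ : Set (FGMark AP)), ({LTL.alw ψ} : Set (LTL AP)))} (fgDelta ψ α)))}
termination_by φ _ => φ.size
decreasing_by
  all_goals simp [LTL.size] at *
  all_goals omega

/-- Big disjunction of a list of acceptance formulae. -/
def bigAndAcc {Mk : Type} (l : List (AccFormula Mk)) : AccFormula Mk :=
  l.foldr AccFormula.and AccFormula.tt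

def bigOrAcc {Mk : Type} (l : List (AccFormula Mk)) : AccFormula Mk :=
  l.foldr AccFormula.or AccFormula.ff

/-- The co-Büchi SLAA produced by the basic translation of `φ`. -/
def basicSLAA {AP : Type} (φ : LTL AP) : AltAutomaton (LTL AP) (Set AP) Unit where
  states := φ.subsSet
  alphabet := {α | α ⊆ φ.apSet}
  marks := {()}
  delta := {t | t.src ∈ φ.subsSet ∧ t.lab ⊆ φ.apSet ∧ (t.marks, t.dest) ∈ basicDelta t.src t.lab}
  init := φ
  acc := AccFormula.fin ()

/-- The acceptance formula of the F-merging translation: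
`Fin m ∧ ⋀_{Fψ} ⋁_{K ∈ ψ̄} Fin o^K_{Fψ}`. -/
def fmergeAcc {AP : Type} (φ : LTL AP) : AccFormula (FMark AP) :=
  AccFormula.and (AccFormula.fin FMark.base)
    (bigAndAcc ((φ.subs.filter LTL.isEv).map (fun χ =>
      match χ with
      | LTL.ev ψ => bigOrAcc (ψ.dnfList.map (fun K => AccFormula.fin (FMark.orange ψ K)))
      | _ => AccFormula.tt)))

/-- The Inf-less SLAA produced by the F-merging translation of `φ`. -/
def fmergeSLAA {AP : Type} (φ : LTL AP) : AltAutomaton (LTL AP) (Set AP) (FMark AP) where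
  states := φ.subsSet
  alphabet := {α | α ⊆ φ.apSet}
  marks := {FMark.base} ∪
    {m | ∃ ψ, LTL.ev ψ ∈ φ.subsSet ∧ ∃ K, K ∈ ψ.dnfList ∧ m = FMark.orange ψ K}
  delta := {t | t.src ∈ φ.subsSet ∧ t.lab ⊆ φ.apSet ∧ (t.marks, t.dest) ∈ fmergeDelta t.src t.lab}
  init := φ
  acc := fmergeAcc φ

/-- The acceptance formula of the F,G-merging translation:
`⋀_{ψ ∈ U_φ} (Fin f_ψ ∨ Inf e_ψ) ∧
 ⋀_{Fψ ∈ F_φ} ((Fin f_{Fψ} ∧ ⋁_{K ∈ ψ̄} Fin o^K_{Fψ}) ∨ Inf e_{Fψ})`. -/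
def fgAcc {AP : Type} (φ : LTL AP) : AccFormula (FGMark AP) :=
  AccFormula.and
    (bigAndAcc ((φ.subs.filter LTL.isU).map (fun ψ =>
      AccFormula.or (AccFormula.fin (FGMark.f ψ)) (AccFormula.inf (FGMark.e ψ)))))
    (bigAndAcc ((φ.subs.filter LTL.isEv).map (fun χ =>
      match χ with
      | LTL.ev ψ =>
          AccFormula.or
            (AccFormula.and (AccFormula.fin (FGMark.f (LTL.ev ψ)))
              (bigOrAcc (ψ.dnfList.map (fun K => AccFormula.fin (FGMark.o ψ K)))))
            (AccFormula.inf (FGMark.e (LTL.ev ψ)))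
      | _ => AccFormula.tt)))

/-- The set of acceptance marks of the F,G-merging translation. -/
def fgMarks {AP : Type} (φ : LTL AP) : Set (FGMark AP) :=
  {m | ∃ ψ₁ ψ₂, LTL.untl ψ₁ ψ₂ ∈ φ.subsSet ∧
        (m = FGMark.f (LTL.untl ψ₁ ψ₂) ∨ m = FGMark.e (LTL.untl ψ₁ ψ₂))} ∪
  {m | ∃ ψ, LTL.ev ψ ∈ φ.subsSet ∧
        (m = FGMark.f (LTL.ev ψ) ∨ m = FGMark.e (LTL.ev ψ) ∨
         ∃ K, K ∈ ψ.dnfList ∧ m = FGMark.o ψ K)}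

/-- The SLAA produced by the F,G-merging translation of `φ`. -/
def fgSLAA {AP : Type} (φ : LTL AP) : AltAutomaton (LTL AP) (Set AP) (FGMark AP) where
  states := φ.subsSet
  alphabet := {α | α ⊆ φ.apSet}
  marks := fgMarks φ
  delta := {t | t.src ∈ φ.subsSet ∧ t.lab ⊆ φ.apSet ∧ (t.marks, t.dest) ∈ fgDelta t.src t.lab}
  init := φ
  acc := fgAcc φ

/-- Big syntactic disjunction / conjunction of lists of LTL formulae. -/
def bigOrL {AP : Type} (l : List (LTL AP)) : LTL AP := l.foldr LTL.or LTL.ff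

def bigAndL {AP : Type} (l : List (LTL AP)) : LTL AP := l.foldr LTL.and LTL.tt

/-- `l` is a list enumerating exactly the elements of the set `S`. -/
def ListEnum {α : Type} (l : List α) (S : Set α) : Prop := ∀ x, x ∈ l ↔ x ∈ S

/-- `ψ` is a syntactic disjunction (resp. conjunction) of an enumeration of `G`. -/
def EnumOr {AP : Type} (G : Set (LTL AP)) (ψ : LTL AP) : Prop :=
  ∃ l, ListEnum l G ∧ ψ = bigOrL l

def EnumAnd {AP : Type} (G : Set (LTL AP)) (ψ : LTL AP) : Prop :=
  ∃ l, ListEnum l G ∧ ψ = bigAndL l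

/-- `ψ` is the formula `φ_α = ⋀_{a ∈ α} a ∧ ⋀_{a ∈ AP' ∖ α} ¬a`. -/
def LetterForm {AP : Type} (AP' α : Set AP) (ψ : LTL AP) : Prop :=
  EnumAnd ({χ | ∃ a ∈ α, χ = LTL.atom a} ∪ {χ | ∃ a ∈ AP' \ α, χ = LTL.natom a}) ψ

section SLAAtoLTL

variable {AP St Mk : Type}

/-- `χ` is the component formula `φ_α ∧ X φ(C ∖ {s})` of a looping transition `t`. -/
def CompLoop (AP' : Set AP) (F : St → LTL AP) (t : Trans St (Set AP) Mk)
    (χ : LTL AP) : Prop :=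
  ∃ ℓ ξ, LetterForm AP' t.lab ℓ ∧ EnumAnd (F '' (t.dest \ {t.src})) ξ ∧
    χ = LTL.and ℓ (LTL.next ξ)

/-- `χ` is the component formula `φ_α ∧ X φ(C)` of a non-looping transition `t`. -/
def CompNonLoop (AP' : Set AP) (F : St → LTL AP) (t : Trans St (Set AP) Mk)
    (χ : LTL AP) : Prop :=
  ∃ ℓ ξ, LetterForm AP' t.lab ℓ ∧ EnumAnd (F '' t.dest) ξ ∧
    χ = LTL.and ℓ (LTL.next ξ)

/-- Looping transitions of `A` from `s`. -/
def loopTrans {Λ' Mk' : Type} (A : AltAutomaton St Λ' Mk') (s : St) : Set (Trans St Λ' Mk') :=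
  {t | t ∈ A.delta ∧ t.src = s ∧ s ∈ t.dest}

/-- Non-looping transitions of `A` from `s`. -/
def nonloopTrans {Λ' Mk' : Type} (A : AltAutomaton St Λ' Mk') (s : St) : Set (Trans St Λ' Mk') :=
  {t | t ∈ A.delta ∧ t.src = s ∧ s ∉ t.dest}

/-- `ψ₁` is the formula
`(⋁_{loops} φ_α ∧ X φ(C∖{s})) U (⋁_{non-loops} φ_α ∧ X φ(C))`. -/
def Phi1Spec (AP' : Set AP) (A : AltAutomaton St (Set AP) Mk) (F : St → LTL AP)
    (s : St) (ψ₁ : LTL AP) : Prop :=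
  ∃ l₁ l₂ c₁ c₂, ListEnum l₁ (loopTrans A s) ∧ ListEnum l₂ (nonloopTrans A s) ∧
    List.Forall₂ (CompLoop AP' F) l₁ c₁ ∧ List.Forall₂ (CompNonLoop AP' F) l₂ c₂ ∧
    ψ₁ = LTL.untl (bigOrL c₁) (bigOrL c₂)

/-- `ψ₂` is the formula `G ⋁_{loops} φ_α ∧ X φ(C∖{s})`. -/
def Phi2Spec (AP' : Set AP) (A : AltAutomaton St (Set AP) Mk) (F : St → LTL AP)
    (s : St) (ψ₂ : LTL AP) : Prop :=
  ∃ l c, ListEnum l (loopTrans A s) ∧ List.Forall₂ (CompLoop AP' F) l c ∧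
    ψ₂ = LTL.alw (bigOrL c)

/-- `ξ` is the conjunct `GF ⋁_{loops marked by m} φ_α ∧ X φ(C∖{s})`. -/
def GFSpec (AP' : Set AP) (A : AltAutomaton St (Set AP) Mk) (F : St → LTL AP)
    (s : St) (m : Mk) (ξ : LTL AP) : Prop :=
  ∃ l c, ListEnum l {t | t ∈ loopTrans A s ∧ m ∈ t.marks} ∧
    List.Forall₂ (CompLoop AP' F) l c ∧ ξ = LTL.alw (LTL.ev (bigOrL c))

/-- `ξ` is the conjunct `FG ⋁_{loops not marked by m} φ_α ∧ X φ(C∖{s})`. -/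
def FGSpec (AP' : Set AP) (A : AltAutomaton St (Set AP) Mk) (F : St → LTL AP)
    (s : St) (m : Mk) (ξ : LTL AP) : Prop :=
  ∃ l c, ListEnum l {t | t ∈ loopTrans A s ∧ m ∉ t.marks} ∧
    List.Forall₂ (CompLoop AP' F) l c ∧ ξ = LTL.ev (LTL.alw (bigOrL c))

/-- `χ` is the disjunct of `φ₃(s)` corresponding to the minimal model `O`. -/
def ModelSpec (AP' : Set AP) (A : AltAutomaton St (Set AP) Mk) (F : St → LTL AP)
    (s : St) (O : Set (AccTerm Mk)) (χ : LTL AP) : Prop :=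
  ∃ linf lfin cinf cfin, ListEnum linf (infOf O) ∧ ListEnum lfin (finOf O) ∧
    List.Forall₂ (GFSpec AP' A F s) linf cinf ∧
    List.Forall₂ (FGSpec AP' A F s) lfin cfin ∧
    χ = LTL.and (bigAndL cinf) (bigAndL cfin)

/-- `ψ₃` is the disjunction over all minimal models of the acceptance formula. -/
def Phi3Spec (AP' : Set AP) (A : AltAutomaton St (Set AP) Mk) (F : St → LTL AP)
    (s : St) (ψ₃ : LTL AP) : Prop :=
  ∃ lm c, ListEnum lm A.acc.MinModels ∧
    List.Forall₂ (ModelSpec AP' A F s) lm c ∧ ψ₃ = bigOrL c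

/-- `F` is a result of the inductive SLAA-to-LTL translation: for every state
`s`, `F s = φ₁(s) ∨ (φ₂(s) ∧ φ₃(s))` as constructed from the transitions of
`A` and the minimal models of its acceptance formula. -/
def IsTranslation (AP' : Set AP) (A : AltAutomaton St (Set AP) Mk)
    (F : St → LTL AP) : Prop :=
  ∀ s ∈ A.states, ∃ ψ₁ ψ₂ ψ₃,
    Phi1Spec AP' A F s ψ₁ ∧ Phi2Spec AP' A F s ψ₂ ∧ Phi3Spec AP' A F s ψ₃ ∧
    F s = LTL.or ψ₁ (LTL.and ψ₂ ψ₃)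

end SLAAtoLTL
/-! ### Infrastructure -/

section Infra

open Classical

lemma shift_apply {α : Type} (u : ℕ → α) (i k : ℕ) : shift u i k = u (k + i) := rfl

lemma shift_zero {α : Type} (u : ℕ → α) : shift u 0 = u := rfl

lemma shift_shift {α : Type} (u : ℕ → α) (i k : ℕ) :
    shift (shift u i) k = shift u (k + i) := by
  funext n; simp [shift, Nat.add_assoc]

namespace LTL
variable {AP : Type} {u : ℕ → Set AP} {φ ψ : LTL AP}

lemma sat_untl_iff :
    Sat u (untl φ ψ) ↔ Sat u ψ ∨ (Sat u φ ∧ Sat (shift u 1) (untl φ ψ)) := by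
  constructor
  · rintro ⟨i, hψ, hφ⟩
    cases i with
    | zero => left; rwa [shift_zero] at hψ
    | succ n =>
      right
      refine ⟨by simpa [shift_zero] using hφ 0 (Nat.succ_pos n), ⟨n, ?_, ?_⟩⟩
      · rw [shift_shift]; exact hψ
      · intro j hj
        rw [shift_shift]
        exact hφ (j + 1) (by omega)
  · rintro (h | ⟨h1, i, hψ, hφ⟩)
    · exact ⟨0, by rwa [shift_zero], fun j hj => absurd hj (Nat.not_lt_zero j)⟩
    · refine ⟨i + 1, by rwa [shift_shift] at hψ, ?_⟩
      intro j hj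
      cases j with
      | zero => rwa [shift_zero]
      | succ m =>
        have := hφ m (by omega)
        rwa [shift_shift] at this

lemma sat_ev_iff : Sat u (ev ψ) ↔ Sat u ψ ∨ Sat (shift u 1) (ev ψ) := by
  constructor
  · rintro ⟨i, hψ⟩
    cases i with
    | zero => left; rwa [shift_zero] at hψ
    | succ n => right; exact ⟨n, by rwa [shift_shift]⟩
  · rintro (h | ⟨i, hψ⟩)
    · exact ⟨0, by rwa [shift_zero]⟩
    · exact ⟨i + 1, by rwa [shift_shift] at hψ⟩

lemma sat_alw_iff : Sat u (alw ψ) ↔ Sat u ψ ∧ Sat (shift u 1) (alw ψ) := by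
  constructor
  · intro h
    refine ⟨by have := h 0; rwa [shift_zero] at this, fun i => ?_⟩
    rw [shift_shift]; exact h (i + 1)
  · rintro ⟨h0, h⟩ i
    cases i with
    | zero => rwa [shift_zero]
    | succ n => have := h n; rwa [shift_shift] at this

lemma sat_rels_iff :
    Sat u (rels φ ψ) ↔ Sat u ψ ∧ (Sat u φ ∨ Sat (shift u 1) (rels φ ψ)) := by
  constructor
  · rintro (⟨i, hφ, hψ⟩ | hall)
    · cases i with
      | zero =>
        refine ⟨by have := hψ 0 (le_refl 0); rwa [shift_zero] at this, Or.inl ?_⟩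
        rwa [shift_zero] at hφ
      | succ n =>
        refine ⟨by have := hψ 0 (by omega); rwa [shift_zero] at this, Or.inr (Or.inl ⟨n, ?_, ?_⟩)⟩
        · rwa [shift_shift]
        · intro j hj
          have := hψ (j + 1) (by omega)
          rwa [shift_shift]
    · refine ⟨by have := hall 0; rwa [shift_zero] at this, Or.inr (Or.inr fun i => ?_)⟩
      rw [shift_shift]; exact hall (i + 1)
  · rintro ⟨h0, (hφ | (⟨i, hφ, hψ⟩ | hall))⟩
    · exact Or.inl ⟨0, by rwa [shift_zero], fun j hj => by
        interval_cases j; rwa [shift_zero]⟩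
    · refine Or.inl ⟨i + 1, by rwa [shift_shift] at hφ, fun j hj => ?_⟩
      cases j with
      | zero => rwa [shift_zero]
      | succ m =>
        have := hψ m (by omega)
        rwa [shift_shift] at this
    · refine Or.inr fun i => ?_
      cases i with
      | zero => rwa [shift_zero]
      | succ n => have := hall n; rwa [shift_shift] at this

end LTL

end Infra
section Infra2

namespace LTL
variable {AP : Type} {u : ℕ → Set AP} {φ ψ : LTL AP}

lemma bigOrL_nil : bigOrL ([] : List (LTL AP)) = LTL.ff := rfl
lemma bigOrL_cons (χ : LTL AP) (l : List (LTL AP)) :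
    bigOrL (χ :: l) = LTL.or χ (bigOrL l) := rfl
lemma bigAndL_nil : bigAndL ([] : List (LTL AP)) = LTL.tt := rfl
lemma bigAndL_cons (χ : LTL AP) (l : List (LTL AP)) :
    bigAndL (χ :: l) = LTL.and χ (bigAndL l) := rfl

lemma sat_bigOrL {l : List (LTL AP)} : Sat u (bigOrL l) ↔ ∃ χ ∈ l, Sat u χ := by
  induction l with
  | nil => simp [bigOrL_nil, Sat]
  | cons c l ih => rw [bigOrL_cons]; simp only [Sat]; rw [ih]; simp

lemma sat_bigAndL {l : List (LTL AP)} : Sat u (bigAndL l) ↔ ∀ χ ∈ l, Sat u χ := by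
  induction l with
  | nil => simp [bigAndL_nil, Sat]
  | cons c l ih => rw [bigAndL_cons]; simp only [Sat]; rw [ih]; simp

lemma apSet_bigOrL {l : List (LTL AP)} {S : Set AP} (h : ∀ χ ∈ l, χ.apSet ⊆ S) :
    (bigOrL l).apSet ⊆ S := by
  induction l with
  | nil => simp [bigOrL_nil, apSet]
  | cons c l ih =>
    simp only [bigOrL_cons, apSet]
    exact Set.union_subset (h c (by simp)) (ih fun χ hχ => h χ (by simp [hχ]))

lemma apSet_bigAndL {l : List (LTL AP)} {S : Set AP} (h : ∀ χ ∈ l, χ.apSet ⊆ S) :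
    (bigAndL l).apSet ⊆ S := by
  induction l with
  | nil => simp [bigAndL_nil, apSet]
  | cons c l ih =>
    simp only [bigAndL_cons, apSet]
    exact Set.union_subset (h c (by simp)) (ih fun χ hχ => h χ (by simp [hχ]))

lemma mem_subs_self (φ : LTL AP) : φ ∈ φ.subs := by
  cases φ <;> simp [subs]

lemma subs_trans : ∀ φ ψ : LTL AP, ψ ∈ φ.subs → ψ.subs ⊆ φ.subs := by
  intro φ
  induction φ with
  | tt => intro ψ h; simp [subs] at h; subst h; exact fun x hx => hx
  | ff => intro ψ h; simp [subs] at h; subst h; exact fun x hx => hx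
  | atom a => intro ψ h; simp [subs] at h; subst h; exact fun x hx => hx
  | natom a => intro ψ h; simp [subs] at h; subst h; exact fun x hx => hx
  | or φ1 φ2 ih1 ih2 =>
    intro ψ h
    simp only [subs, List.mem_cons, List.mem_append] at h
    rcases h with h | h | h
    · subst h; exact fun x hx => hx
    · exact fun x hx => by
        simp only [subs, List.mem_cons, List.mem_append]
        exact Or.inr (Or.inl (ih1 ψ h hx))
    · exact fun x hx => by
        simp only [subs, List.mem_cons, List.mem_append]
        exact Or.inr (Or.inr (ih2 ψ h hx))
  | and φ1 φ2 ih1 ih2 =>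
    intro ψ h
    simp only [subs, List.mem_cons, List.mem_append] at h
    rcases h with h | h | h
    · subst h; exact fun x hx => hx
    · exact fun x hx => by
        simp only [subs, List.mem_cons, List.mem_append]
        exact Or.inr (Or.inl (ih1 ψ h hx))
    · exact fun x hx => by
        simp only [subs, List.mem_cons, List.mem_append]
        exact Or.inr (Or.inr (ih2 ψ h hx))
  | untl φ1 φ2 ih1 ih2 =>
    intro ψ h
    simp only [subs, List.mem_cons, List.mem_append] at h
    rcases h with h | h | h
    · subst h; exact fun x hx => hx
    · exact fun x hx => by
        simp only [subs, List.mem_cons, List.mem_append]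
        exact Or.inr (Or.inl (ih1 ψ h hx))
    · exact fun x hx => by
        simp only [subs, List.mem_cons, List.mem_append]
        exact Or.inr (Or.inr (ih2 ψ h hx))
  | rels φ1 φ2 ih1 ih2 =>
    intro ψ h
    simp only [subs, List.mem_cons, List.mem_append] at h
    rcases h with h | h | h
    · subst h; exact fun x hx => hx
    · exact fun x hx => by
        simp only [subs, List.mem_cons, List.mem_append]
        exact Or.inr (Or.inl (ih1 ψ h hx))
    · exact fun x hx => by
        simp only [subs, List.mem_cons, List.mem_append]
        exact Or.inr (Or.inr (ih2 ψ h hx))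
  | next φ1 ih1 =>
    intro ψ h
    simp only [subs, List.mem_cons] at h
    rcases h with h | h
    · subst h; exact fun x hx => hx
    · exact fun x hx => by
        simp only [subs, List.mem_cons]
        exact Or.inr (ih1 ψ h hx)
  | ev φ1 ih1 =>
    intro ψ h
    simp only [subs, List.mem_cons] at h
    rcases h with h | h
    · subst h; exact fun x hx => hx
    · exact fun x hx => by
        simp only [subs, List.mem_cons]
        exact Or.inr (ih1 ψ h hx)
  | alw φ1 ih1 =>
    intro ψ h
    simp only [subs, List.mem_cons] at h
    rcases h with h | h
    · subst h; exact fun x hx => hx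
    · exact fun x hx => by
        simp only [subs, List.mem_cons]
        exact Or.inr (ih1 ψ h hx)

lemma apSet_mono : ∀ φ ψ : LTL AP, ψ ∈ φ.subs → ψ.apSet ⊆ φ.apSet := by
  intro φ
  induction φ with
  | tt => intro ψ h; simp [subs] at h; subst h; exact fun x hx => hx
  | ff => intro ψ h; simp [subs] at h; subst h; exact fun x hx => hx
  | atom a => intro ψ h; simp [subs] at h; subst h; exact fun x hx => hx
  | natom a => intro ψ h; simp [subs] at h; subst h; exact fun x hx => hx
  | or φ1 φ2 ih1 ih2 =>
    intro ψ h
    simp only [subs, List.mem_cons, List.mem_append] at h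
    rcases h with h | h | h
    · subst h; exact fun x hx => hx
    · exact fun x hx => Or.inl (ih1 ψ h hx)
    · exact fun x hx => Or.inr (ih2 ψ h hx)
  | and φ1 φ2 ih1 ih2 =>
    intro ψ h
    simp only [subs, List.mem_cons, List.mem_append] at h
    rcases h with h | h | h
    · subst h; exact fun x hx => hx
    · exact fun x hx => Or.inl (ih1 ψ h hx)
    · exact fun x hx => Or.inr (ih2 ψ h hx)
  | untl φ1 φ2 ih1 ih2 =>
    intro ψ h
    simp only [subs, List.mem_cons, List.mem_append] at h
    rcases h with h | h | h
    · subst h; exact fun x hx => hx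
    · exact fun x hx => Or.inl (ih1 ψ h hx)
    · exact fun x hx => Or.inr (ih2 ψ h hx)
  | rels φ1 φ2 ih1 ih2 =>
    intro ψ h
    simp only [subs, List.mem_cons, List.mem_append] at h
    rcases h with h | h | h
    · subst h; exact fun x hx => hx
    · exact fun x hx => Or.inl (ih1 ψ h hx)
    · exact fun x hx => Or.inr (ih2 ψ h hx)
  | next φ1 ih1 =>
    intro ψ h
    simp only [subs, List.mem_cons] at h
    rcases h with h | h
    · subst h; exact fun x hx => hx
    · exact ih1 ψ h
  | ev φ1 ih1 =>
    intro ψ h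
    simp only [subs, List.mem_cons] at h
    rcases h with h | h
    · subst h; exact fun x hx => hx
    · exact ih1 ψ h
  | alw φ1 ih1 =>
    intro ψ h
    simp only [subs, List.mem_cons] at h
    rcases h with h | h
    · subst h; exact fun x hx => hx
    · exact ih1 ψ h

lemma apSet_finite (φ : LTL AP) : φ.apSet.Finite := by
  induction φ with
  | tt => simp [apSet]
  | ff => simp [apSet]
  | atom a => simp [apSet]
  | natom a => simp [apSet]
  | or φ1 φ2 ih1 ih2 => exact ih1.union ih2
  | and φ1 φ2 ih1 ih2 => exact ih1.union ih2
  | untl φ1 φ2 ih1 ih2 => exact ih1.union ih2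
  | rels φ1 φ2 ih1 ih2 => exact ih1.union ih2
  | next φ1 ih1 => exact ih1
  | ev φ1 ih1 => exact ih1
  | alw φ1 ih1 => exact ih1

lemma subsSet_finite (φ : LTL AP) : φ.subsSet.Finite := List.finite_toSet φ.subs

end LTL

end Infra2
section AutoInfra

open Classical

variable {St Λ Mk : Type}

lemma Trans.ext' {t₁ t₂ : Trans St Λ Mk} (h1 : t₁.src = t₂.src) (h2 : t₁.lab = t₂.lab)
    (h3 : t₁.marks = t₂.marks) (h4 : t₁.dest = t₂.dest) : t₁ = t₂ := by
  cases t₁; cases t₂; simp_all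

/-- A forward chain of transitions starting at level `n`. -/
def IsChainFrom (ρ : ℕ → Set (Trans St Λ Mk)) (n : ℕ) (b : ℕ → Trans St Λ Mk) : Prop :=
  ∀ k, b k ∈ ρ (n + k) ∧ (b (k + 1)).src ∈ (b k).dest

lemma chain_extend {A : AltAutomaton St Λ Mk} {u : ℕ → Λ} {ρ : ℕ → Set (Trans St Λ Mk)}
    (hrun : A.IsRun u ρ) :
    ∀ n b, IsChainFrom ρ n b → ∃ b', IsInfBranch ρ b' ∧ ∀ k, b' (n + k) = b k := by
  intro n
  induction n with
  | zero =>
    intro b hb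
    exact ⟨b, fun i => by simpa using hb i, fun k => by simp⟩
  | succ m ih =>
    intro b hb
    have hsrc : (b 0).src ∈ mdom (ρ (m + 1)) := ⟨b 0, (hb 0).1, rfl⟩
    rw [← (hrun.2 m).2.2] at hsrc
    obtain ⟨t, ht, hdest⟩ := hsrc
    set b₁ : ℕ → Trans St Λ Mk := fun k => Nat.rec t (fun k _ => b k) k with hb₁
    have hb₁0 : b₁ 0 = t := rfl
    have hb₁s : ∀ k, b₁ (k + 1) = b k := fun k => rfl
    have hchain : IsChainFrom ρ m b₁ := by
      intro k
      cases k with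
      | zero =>
        refine ⟨by rw [hb₁0]; simpa using ht, ?_⟩
        rw [hb₁s 0, hb₁0]; exact hdest
      | succ j =>
        refine ⟨?_, ?_⟩
        · rw [hb₁s j]
          have := (hb j).1
          convert this using 2
          omega
        · rw [hb₁s (j+1), hb₁s j]
          exact (hb j).2
    obtain ⟨b', hb', heq⟩ := ih b₁ hchain
    refine ⟨b', hb', fun k => ?_⟩
    have : m + 1 + k = m + (k + 1) := by omega
    rw [this, heq (k + 1), hb₁s k]

lemma infMarks_of_tail {b b' : ℕ → Trans St Λ Mk} {n : ℕ}
    (h : ∀ k, b' (n + k) = b k) : infMarks b' = infMarks b := by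
  ext m
  constructor
  · intro hm N
    obtain ⟨i, hi, hmi⟩ := hm (n + N)
    refine ⟨i - n, by omega, ?_⟩
    have : b' (n + (i - n)) = b (i - n) := h (i - n)
    rw [show n + (i - n) = i by omega] at this
    rwa [← this]
  · intro hm N
    obtain ⟨k, hk, hmk⟩ := hm N
    exact ⟨n + k, by omega, by rw [h k]; exact hmk⟩

lemma acc_of_chain {A : AltAutomaton St Λ Mk} {u : ℕ → Λ} {ρ : ℕ → Set (Trans St Λ Mk)}
    (hacc : A.IsAccRun u ρ) {n : ℕ} {b : ℕ → Trans St Λ Mk}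
    (hb : IsChainFrom ρ n b) : A.acc.Sat (infMarks b) := by
  obtain ⟨b', hb', heq⟩ := chain_extend hacc.1 n b hb
  have := hacc.2 b' hb'
  rwa [infMarks_of_tail heq] at this

/-- configurations of a run stay below the initial state (for SLAA). -/
lemma config_le {A : AltAutomaton St Λ Mk} {u : ℕ → Λ} {ρ : ℕ → Set (Trans St Λ Mk)}
    {le : St → St → Prop} (hrefl : ∀ x, le x x) (htrans : ∀ x y z, le x y → le y z → le x z)
    (hdest : ∀ t ∈ A.delta, ∀ x ∈ t.dest, le x t.src)
    (hrun : A.IsRun u ρ) : ∀ k, ∀ x ∈ mdom (ρ k), le x A.init := by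
  intro k
  induction k with
  | zero =>
    intro x hx
    rw [hrun.1] at hx
    rw [hx]
    exact hrefl _
  | succ j ih =>
    intro x hx
    rw [← (hrun.2 j).2.2] at hx
    obtain ⟨t, ht, hxt⟩ := hx
    have h1 : le x t.src := hdest t ((hrun.2 j).1 ht) x hxt
    have h2 : le t.src A.init := ih t.src ⟨t, ht, rfl⟩
    exact htrans _ _ _ h1 h2

/-- sub-run extraction. -/
lemma subrun {A : AltAutomaton St Λ Mk} {u : ℕ → Λ} {ρ : ℕ → Set (Trans St Λ Mk)}
    (hacc : A.IsAccRun u ρ) {n : ℕ} {c : St} (hc : c ∈ mdom (ρ n)) :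
    ∃ ρ', ({ A with init := c } : AltAutomaton St Λ Mk).IsAccRun (shift u n) ρ' := by
  classical
  obtain ⟨hrun, hbr⟩ := hacc
  -- define configurations
  let D : ℕ → Set St := fun k => Nat.rec {c} (fun k Dk => mrange (restrict (ρ (n + k)) Dk)) k
  have hD0 : D 0 = {c} := rfl
  have hDs : ∀ k, D (k + 1) = mrange (restrict (ρ (n + k)) (D k)) := fun k => rfl
  let ρ' : ℕ → Set (Trans St Λ Mk) := fun k => restrict (ρ (n + k)) (D k)
  have hsub : ∀ k, ρ' k ⊆ ρ (n + k) := fun k t ht => ht.1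
  have hDdom : ∀ k, D k ⊆ mdom (ρ (n + k)) := by
    intro k
    induction k with
    | zero =>
      intro x hx
      rw [hD0] at hx
      rw [hx]
      simpa using hc
    | succ j ih =>
      intro x hx
      rw [hDs j] at hx
      obtain ⟨t, ht, hxt⟩ := hx
      have : x ∈ mrange (ρ (n + j)) := ⟨t, ht.1, hxt⟩
      rw [(hrun.2 (n + j)).2.2] at this
      exact this
  have hdom : ∀ k, mdom (ρ' k) = D k := by
    intro k
    ext x
    constructor
    · rintro ⟨t, ⟨_, hsrc⟩, rfl⟩
      exact hsrc
    · intro hx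
      obtain ⟨t, ht, hsrc⟩ := hDdom k hx
      exact ⟨t, ⟨ht, by rwa [hsrc]⟩, hsrc⟩
  refine ⟨ρ', ⟨⟨by rw [hdom 0, hD0], fun k => ?_⟩, ?_⟩⟩
  · refine ⟨fun t ht => (hrun.2 (n + k)).1 ht.1, ⟨fun t ht => ?_, ?_⟩, ?_⟩
    · have := (hrun.2 (n + k)).2.1.1 t ht.1
      rw [this, shift_apply]
      congr 1
      omega
    · intro t₁ h₁ t₂ h₂ hsrc
      exact (hrun.2 (n + k)).2.1.2 t₁ h₁.1 t₂ h₂.1 hsrc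
    · rw [hdom (k + 1), hDs k]
  · intro b hb
    have hchain : IsChainFrom ρ n b := fun k => ⟨hsub k ((hb k).1), (hb k).2⟩
    exact acc_of_chain ⟨hrun, hbr⟩ hchain

lemma eventually_const {f : ℕ → ℕ} {J0 : ℕ} (h : ∀ j, J0 ≤ j → f (j + 1) ≤ f j) :
    ∃ J, J0 ≤ J ∧ ∀ j, J ≤ j → f j = f J := by
  have hmono : ∀ j, J0 ≤ j → ∀ j', j ≤ j' → f j' ≤ f j := by
    intro j hj j' hjj
    induction j', hjj using Nat.le_induction with
    | base => exact le_refl _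
    | succ m hm ih => exact le_trans (h m (by omega)) ih
  have hne : {v | ∃ j, J0 ≤ j ∧ f j = v}.Nonempty := ⟨f J0, J0, le_refl _, rfl⟩
  obtain ⟨J, hJ, hfJ⟩ := Nat.sInf_mem hne
  refine ⟨J, hJ, fun j hj => ?_⟩
  have h1 : f j ≤ f J := hmono J hJ j hj
  have h2 : sInf {v | ∃ j, J0 ≤ j ∧ f j = v} ≤ f j := Nat.sInf_le ⟨j, by omega, rfl⟩
  omega

lemma delta_finite {A : AltAutomaton St Λ Mk} (hwf : A.WellFormed) : A.delta.Finite := by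
  obtain ⟨hst, hal, hmk, _, hdel, _⟩ := hwf
  have : A.delta ⊆ (fun q : St × Λ × Set Mk × Set St =>
      Trans.mk q.1 q.2.1 q.2.2.1 q.2.2.2) ''
      (A.states ×ˢ A.alphabet ×ˢ {M | M ⊆ A.marks} ×ˢ {C | C ⊆ A.states}) := by
    intro t ht
    obtain ⟨h1, h2, h3, h4⟩ := hdel t ht
    exact ⟨(t.src, t.lab, t.marks, t.dest), ⟨h1, h2, h3, h4⟩, rfl⟩
  exact Set.Finite.subset (Set.Finite.image _
    (hst.prod (hal.prod ((hmk.finite_subsets).prod (hst.finite_subsets))))) this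

end AutoInfra
/-! ### Direction 1: LTL → SLAA -/

section Dir1

open Classical LTL

variable {AP : Type}

lemma shift_succ {α : Type} (u : ℕ → α) (n : ℕ) :
    shift (shift u n) 1 = shift u (n + 1) := by
  rw [shift_shift, Nat.add_comm]

lemma shift_at_zero {α : Type} (u : ℕ → α) (n : ℕ) : shift u n 0 = u n := by
  simp [shift_apply]

lemma size_pos (φ : LTL AP) : 0 < φ.size := by
  cases φ <;> simp [LTL.size]

/-- Transition function of our co-Büchi translation. -/
def myDelta : LTL AP → Set AP → Set (Set Unit × Set (LTL AP))
  | .tt, _ => {(∅, ∅)}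
  | .ff, _ => ∅
  | .atom a, α => {p | p = (∅, ∅) ∧ a ∈ α}
  | .natom a, α => {p | p = (∅, ∅) ∧ a ∉ α}
  | .and φ ψ, α => {r | ∃ M₁ C₁ M₂ C₂, (M₁, C₁) ∈ myDelta φ α ∧ (M₂, C₂) ∈ myDelta ψ α ∧
      r = (∅, C₁ ∪ C₂)}
  | .or φ ψ, α => {r | ∃ M C, ((M, C) ∈ myDelta φ α ∨ (M, C) ∈ myDelta ψ α) ∧ r = (∅, C)}
  | .next φ, _ => {(∅, {φ})}
  | .untl φ ψ, α => {r | (∃ M C, (M, C) ∈ myDelta ψ α ∧ r = (∅, C)) ∨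
      (∃ M C, (M, C) ∈ myDelta φ α ∧ r = ({()}, insert (LTL.untl φ ψ) C))}
  | .rels φ ψ, α => {r | (∃ M₁ C₁ M₂ C₂, (M₁, C₁) ∈ myDelta φ α ∧ (M₂, C₂) ∈ myDelta ψ α ∧
      r = (∅, C₁ ∪ C₂)) ∨
      (∃ M C, (M, C) ∈ myDelta ψ α ∧ r = (∅, insert (LTL.rels φ ψ) C))}
  | .ev ψ, α => {r | (∃ M C, (M, C) ∈ myDelta ψ α ∧ r = (∅, C)) ∨ r = ({()}, {LTL.ev ψ})}
  | .alw ψ, α => {r | ∃ M C, (M, C) ∈ myDelta ψ α ∧ r = (∅, insert (LTL.alw ψ) C)}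

lemma size_step {χ φbig : LTL AP} {s : ℕ} (h : χ = φbig ∨ χ.size < φbig.size)
    (hlt : φbig.size < s) : χ.size < s := by
  rcases h with h | h
  · rw [h]; exact hlt
  · omega

/-- destination states are the source itself or strictly smaller. -/
lemma myDelta_size : ∀ (ψ : LTL AP) (α : Set AP) (M : Set Unit) (C : Set (LTL AP)),
    (M, C) ∈ myDelta ψ α → ∀ χ ∈ C, χ = ψ ∨ χ.size < ψ.size := by
  intro ψ
  induction ψ with
  | tt => intro α M C h χ hχ; simp [myDelta] at h; simp [h.2] at hχ
  | ff => intro α M C h; simp [myDelta] at h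
  | atom a => intro α M C h χ hχ; simp [myDelta] at h; simp [h.1.2] at hχ
  | natom a => intro α M C h χ hχ; simp [myDelta] at h; simp [h.1.2] at hχ
  | and φ ψ ih1 ih2 =>
    intro α M C h χ hχ
    obtain ⟨M₁, C₁, M₂, C₂, h1, h2, heq⟩ := h
    rw [Prod.mk.injEq] at heq
    rw [heq.2] at hχ
    rcases hχ with hχ | hχ
    · exact Or.inr (size_step (ih1 α M₁ C₁ h1 χ hχ) (by simp only [LTL.size]; omega))
    · exact Or.inr (size_step (ih2 α M₂ C₂ h2 χ hχ) (by simp only [LTL.size]; omega))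
  | or φ ψ ih1 ih2 =>
    intro α M C h χ hχ
    obtain ⟨M', C', h', heq⟩ := h
    rw [Prod.mk.injEq] at heq
    rw [heq.2] at hχ
    rcases h' with h' | h'
    · exact Or.inr (size_step (ih1 α M' C' h' χ hχ) (by simp only [LTL.size]; omega))
    · exact Or.inr (size_step (ih2 α M' C' h' χ hχ) (by simp only [LTL.size]; omega))
  | next φ ih =>
    intro α M C h χ hχ
    simp [myDelta] at h
    rw [h.2] at hχ
    simp at hχ
    right; rw [hχ]; simp [LTL.size]
  | untl φ ψ ih1 ih2 =>
    intro α M C h χ hχ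
    rcases h with ⟨M', C', h', heq⟩ | ⟨M', C', h', heq⟩
    · rw [Prod.mk.injEq] at heq
      rw [heq.2] at hχ
      exact Or.inr (size_step (ih2 α M' C' h' χ hχ) (by simp only [LTL.size]; omega))
    · rw [Prod.mk.injEq] at heq
      rw [heq.2] at hχ
      rcases hχ with hχ | hχ
      · left; exact hχ
      · exact Or.inr (size_step (ih1 α M' C' h' χ hχ) (by simp only [LTL.size]; omega))
  | rels φ ψ ih1 ih2 =>
    intro α M C h χ hχ
    rcases h with ⟨M₁, C₁, M₂, C₂, h1, h2, heq⟩ | ⟨M', C', h', heq⟩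
    · rw [Prod.mk.injEq] at heq
      rw [heq.2] at hχ
      rcases hχ with hχ | hχ
      · exact Or.inr (size_step (ih1 α M₁ C₁ h1 χ hχ) (by simp only [LTL.size]; omega))
      · exact Or.inr (size_step (ih2 α M₂ C₂ h2 χ hχ) (by simp only [LTL.size]; omega))
    · rw [Prod.mk.injEq] at heq
      rw [heq.2] at hχ
      rcases hχ with hχ | hχ
      · left; exact hχ
      · exact Or.inr (size_step (ih2 α M' C' h' χ hχ) (by simp only [LTL.size]; omega))
  | ev ψ ih =>
    intro α M C h χ hχ
    rcases h with ⟨M', C', h', heq⟩ | heq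
    · rw [Prod.mk.injEq] at heq
      rw [heq.2] at hχ
      exact Or.inr (size_step (ih α M' C' h' χ hχ) (by simp only [LTL.size]; omega))
    · rw [Prod.mk.injEq] at heq
      rw [heq.2] at hχ
      simp at hχ
      left; exact hχ
  | alw ψ ih =>
    intro α M C h χ hχ
    obtain ⟨M', C', h', heq⟩ := h
    rw [Prod.mk.injEq] at heq
    rw [heq.2] at hχ
    rcases hχ with hχ | hχ
    · left; exact hχ
    · exact Or.inr (size_step (ih α M' C' h' χ hχ) (by simp only [LTL.size]; omega))

lemma myDelta_size_le {ψ : LTL AP} {α : Set AP} {M : Set Unit} {C : Set (LTL AP)}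
    (h : (M, C) ∈ myDelta ψ α) : ∀ χ ∈ C, χ.size ≤ ψ.size := by
  intro χ hχ
  rcases myDelta_size ψ α M C h χ hχ with h' | h'
  · exact le_of_eq (congrArg LTL.size h')
  · omega

end Dir1
section Dir1b

open Classical LTL

variable {AP : Type}

/-- destination states are subformulae of the source. -/
lemma myDelta_subs : ∀ (ψ : LTL AP) (α : Set AP) (M : Set Unit) (C : Set (LTL AP)),
    (M, C) ∈ myDelta ψ α → ∀ χ ∈ C, χ ∈ ψ.subs := by
  intro ψ
  induction ψ with
  | tt => intro α M C h χ hχ; simp [myDelta] at h; simp [h.2] at hχ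
  | ff => intro α M C h; simp [myDelta] at h
  | atom a => intro α M C h χ hχ; simp [myDelta] at h; simp [h.1.2] at hχ
  | natom a => intro α M C h χ hχ; simp [myDelta] at h; simp [h.1.2] at hχ
  | and φ ψ ih1 ih2 =>
    intro α M C h χ hχ
    obtain ⟨M₁, C₁, M₂, C₂, h1, h2, heq⟩ := h
    rw [Prod.mk.injEq] at heq
    rw [heq.2] at hχ
    simp only [subs, List.mem_cons, List.mem_append]
    rcases hχ with hχ | hχ
    · exact Or.inr (Or.inl (ih1 α M₁ C₁ h1 χ hχ))
    · exact Or.inr (Or.inr (ih2 α M₂ C₂ h2 χ hχ))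
  | or φ ψ ih1 ih2 =>
    intro α M C h χ hχ
    obtain ⟨M', C', h', heq⟩ := h
    rw [Prod.mk.injEq] at heq
    rw [heq.2] at hχ
    simp only [subs, List.mem_cons, List.mem_append]
    rcases h' with h' | h'
    · exact Or.inr (Or.inl (ih1 α M' C' h' χ hχ))
    · exact Or.inr (Or.inr (ih2 α M' C' h' χ hχ))
  | next φ ih =>
    intro α M C h χ hχ
    simp [myDelta] at h
    rw [h.2] at hχ
    simp at hχ
    simp only [subs, List.mem_cons]
    exact Or.inr (by rw [hχ]; exact mem_subs_self φ)
  | untl φ ψ ih1 ih2 =>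
    intro α M C h χ hχ
    simp only [subs, List.mem_cons, List.mem_append]
    rcases h with ⟨M', C', h', heq⟩ | ⟨M', C', h', heq⟩
    · rw [Prod.mk.injEq] at heq
      rw [heq.2] at hχ
      exact Or.inr (Or.inr (ih2 α M' C' h' χ hχ))
    · rw [Prod.mk.injEq] at heq
      rw [heq.2] at hχ
      rcases hχ with hχ | hχ
      · exact Or.inl hχ
      · exact Or.inr (Or.inl (ih1 α M' C' h' χ hχ))
  | rels φ ψ ih1 ih2 =>
    intro α M C h χ hχ
    simp only [subs, List.mem_cons, List.mem_append]
    rcases h with ⟨M₁, C₁, M₂, C₂, h1, h2, heq⟩ | ⟨M', C', h', heq⟩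
    · rw [Prod.mk.injEq] at heq
      rw [heq.2] at hχ
      rcases hχ with hχ | hχ
      · exact Or.inr (Or.inl (ih1 α M₁ C₁ h1 χ hχ))
      · exact Or.inr (Or.inr (ih2 α M₂ C₂ h2 χ hχ))
    · rw [Prod.mk.injEq] at heq
      rw [heq.2] at hχ
      rcases hχ with hχ | hχ
      · exact Or.inl hχ
      · exact Or.inr (Or.inr (ih2 α M' C' h' χ hχ))
  | ev ψ ih =>
    intro α M C h χ hχ
    simp only [subs, List.mem_cons]
    rcases h with ⟨M', C', h', heq⟩ | heq
    · rw [Prod.mk.injEq] at heq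
      rw [heq.2] at hχ
      exact Or.inr (ih α M' C' h' χ hχ)
    · rw [Prod.mk.injEq] at heq
      rw [heq.2] at hχ
      simp at hχ
      exact Or.inl hχ
  | alw ψ ih =>
    intro α M C h χ hχ
    simp only [subs, List.mem_cons]
    obtain ⟨M', C', h', heq⟩ := h
    rw [Prod.mk.injEq] at heq
    rw [heq.2] at hχ
    rcases hχ with hχ | hχ
    · exact Or.inl hχ
    · exact Or.inr (ih α M' C' h' χ hχ)

/-- one-step soundness of `myDelta`. -/
lemma myDelta_sound : ∀ (ψ : LTL AP) (u : ℕ → Set AP) (M : Set Unit) (C : Set (LTL AP)),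
    (M, C) ∈ myDelta ψ (u 0) → (∀ χ ∈ C, Sat (shift u 1) χ) → Sat u ψ := by
  intro ψ
  induction ψ with
  | tt => intro u M C h hC; trivial
  | ff => intro u M C h; simp [myDelta] at h
  | atom a =>
    intro u M C h hC
    simp [myDelta] at h
    exact h.2
  | natom a =>
    intro u M C h hC
    simp [myDelta] at h
    exact h.2
  | and φ ψ ih1 ih2 =>
    intro u M C h hC
    obtain ⟨M₁, C₁, M₂, C₂, h1, h2, heq⟩ := h
    rw [Prod.mk.injEq] at heq
    refine ⟨ih1 u M₁ C₁ h1 fun χ hχ => ?_, ih2 u M₂ C₂ h2 fun χ hχ => ?_⟩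
    · exact hC χ (by rw [heq.2]; exact Or.inl hχ)
    · exact hC χ (by rw [heq.2]; exact Or.inr hχ)
  | or φ ψ ih1 ih2 =>
    intro u M C h hC
    obtain ⟨M', C', h', heq⟩ := h
    rw [Prod.mk.injEq] at heq
    rcases h' with h' | h'
    · exact Or.inl (ih1 u M' C' h' fun χ hχ => hC χ (by rw [heq.2]; exact hχ))
    · exact Or.inr (ih2 u M' C' h' fun χ hχ => hC χ (by rw [heq.2]; exact hχ))
  | next φ ih =>
    intro u M C h hC
    simp [myDelta] at h
    exact hC φ (by rw [h.2]; rfl)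
  | untl φ ψ ih1 ih2 =>
    intro u M C h hC
    rw [sat_untl_iff]
    rcases h with ⟨M', C', h', heq⟩ | ⟨M', C', h', heq⟩
    · rw [Prod.mk.injEq] at heq
      exact Or.inl (ih2 u M' C' h' fun χ hχ => hC χ (by rw [heq.2]; exact hχ))
    · rw [Prod.mk.injEq] at heq
      refine Or.inr ⟨ih1 u M' C' h' fun χ hχ => hC χ (by rw [heq.2]; exact Set.mem_insert_iff.2 (Or.inr hχ)), ?_⟩
      exact hC _ (by rw [heq.2]; exact Set.mem_insert _ _)
  | rels φ ψ ih1 ih2 =>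
    intro u M C h hC
    rw [sat_rels_iff]
    rcases h with ⟨M₁, C₁, M₂, C₂, h1, h2, heq⟩ | ⟨M', C', h', heq⟩
    · rw [Prod.mk.injEq] at heq
      refine ⟨ih2 u M₂ C₂ h2 fun χ hχ => hC χ (by rw [heq.2]; exact Or.inr hχ),
        Or.inl (ih1 u M₁ C₁ h1 fun χ hχ => hC χ (by rw [heq.2]; exact Or.inl hχ))⟩
    · rw [Prod.mk.injEq] at heq
      refine ⟨ih2 u M' C' h' fun χ hχ => hC χ (by rw [heq.2]; exact Set.mem_insert_iff.2 (Or.inr hχ)), Or.inr ?_⟩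
      exact hC _ (by rw [heq.2]; exact Set.mem_insert _ _)
  | ev ψ ih =>
    intro u M C h hC
    rw [sat_ev_iff]
    rcases h with ⟨M', C', h', heq⟩ | heq
    · rw [Prod.mk.injEq] at heq
      exact Or.inl (ih u M' C' h' fun χ hχ => hC χ (by rw [heq.2]; exact hχ))
    · rw [Prod.mk.injEq] at heq
      exact Or.inr (hC _ (by rw [heq.2]; rfl))
  | alw ψ ih =>
    intro u M C h hC
    rw [sat_alw_iff]
    obtain ⟨M', C', h', heq⟩ := h
    rw [Prod.mk.injEq] at heq
    refine ⟨ih u M' C' h' fun χ hχ => hC χ (by rw [heq.2]; exact Set.mem_insert_iff.2 (Or.inr hχ)), ?_⟩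
    exact hC _ (by rw [heq.2]; exact Set.mem_insert _ _)

end Dir1b
section Dir1c

open Classical LTL

variable {AP : Type}

/-- canonical transition choice for a satisfied formula. -/
noncomputable def choose1 : LTL AP → (ℕ → Set AP) → Set Unit × Set (LTL AP)
  | .tt, _ => (∅, ∅)
  | .ff, _ => (∅, ∅)
  | .atom _, _ => (∅, ∅)
  | .natom _, _ => (∅, ∅)
  | .and φ ψ, v => (∅, (choose1 φ v).2 ∪ (choose1 ψ v).2)
  | .or φ ψ, v => if Sat v φ then (∅, (choose1 φ v).2) else (∅, (choose1 ψ v).2)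
  | .next φ, _ => (∅, {φ})
  | .untl φ ψ, v => if Sat v ψ then (∅, (choose1 ψ v).2)
      else ({()}, insert (LTL.untl φ ψ) (choose1 φ v).2)
  | .rels φ ψ, v => if Sat v φ then (∅, (choose1 φ v).2 ∪ (choose1 ψ v).2)
      else (∅, insert (LTL.rels φ ψ) (choose1 ψ v).2)
  | .ev ψ, v => if Sat v ψ then (∅, (choose1 ψ v).2) else ({()}, {LTL.ev ψ})
  | .alw ψ, v => (∅, insert (LTL.alw ψ) (choose1 ψ v).2)

/-- the chosen transition is legal and its destinations hold one step later. -/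
lemma choose1_spec : ∀ (ψ : LTL AP) (v : ℕ → Set AP), Sat v ψ →
    choose1 ψ v ∈ myDelta ψ (v 0) ∧ ∀ χ ∈ (choose1 ψ v).2, Sat (shift v 1) χ := by
  intro ψ
  induction ψ with
  | tt => intro v hs; refine ⟨by simp [choose1, myDelta], by simp [choose1]⟩
  | ff => intro v hs; exact absurd hs (by simp [Sat])
  | atom a => intro v hs; exact ⟨⟨rfl, hs⟩, by simp [choose1]⟩
  | natom a => intro v hs; exact ⟨⟨rfl, hs⟩, by simp [choose1]⟩
  | and φ ψ ih1 ih2 =>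
    intro v hs
    obtain ⟨h1, h2⟩ := hs
    obtain ⟨m1, d1⟩ := ih1 v h1
    obtain ⟨m2, d2⟩ := ih2 v h2
    refine ⟨⟨(choose1 φ v).1, (choose1 φ v).2, (choose1 ψ v).1, (choose1 ψ v).2, m1, m2, rfl⟩, ?_⟩
    intro χ hχ
    rcases hχ with hχ | hχ
    · exact d1 χ hχ
    · exact d2 χ hχ
  | or φ ψ ih1 ih2 =>
    intro v hs
    by_cases h : Sat v φ
    · obtain ⟨m1, d1⟩ := ih1 v h
      refine ⟨⟨(choose1 φ v).1, (choose1 φ v).2, Or.inl m1, by simp [choose1, if_pos h]⟩, ?_⟩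
      simpa [choose1, if_pos h] using d1
    · have h2 : Sat v ψ := hs.resolve_left h
      obtain ⟨m2, d2⟩ := ih2 v h2
      refine ⟨⟨(choose1 ψ v).1, (choose1 ψ v).2, Or.inr m2, by simp [choose1, if_neg h]⟩, ?_⟩
      simpa [choose1, if_neg h] using d2
  | next φ ih =>
    intro v hs
    refine ⟨by simp [choose1, myDelta], ?_⟩
    intro χ hχ
    simp [choose1] at hχ
    rw [hχ]
    exact hs
  | untl φ ψ ih1 ih2 =>
    intro v hs
    by_cases h : Sat v ψ
    · obtain ⟨m2, d2⟩ := ih2 v h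
      refine ⟨Or.inl ⟨(choose1 ψ v).1, (choose1 ψ v).2, m2, by simp [choose1, if_pos h]⟩, ?_⟩
      simpa [choose1, if_pos h] using d2
    · have hu := sat_untl_iff.1 hs
      rcases hu with hu | ⟨hφ, hnext⟩
      · exact absurd hu h
      obtain ⟨m1, d1⟩ := ih1 v hφ
      refine ⟨Or.inr ⟨(choose1 φ v).1, (choose1 φ v).2, m1, by simp [choose1, if_neg h]⟩, ?_⟩
      intro χ hχ
      simp only [choose1, if_neg h] at hχ
      rcases hχ with hχ | hχ
      · rw [hχ]; exact hnext
      · exact d1 χ hχ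
  | rels φ ψ ih1 ih2 =>
    intro v hs
    have hr := sat_rels_iff.1 hs
    obtain ⟨hψ, hrest⟩ := hr
    obtain ⟨m2, d2⟩ := ih2 v hψ
    by_cases h : Sat v φ
    · obtain ⟨m1, d1⟩ := ih1 v h
      refine ⟨Or.inl ⟨(choose1 φ v).1, (choose1 φ v).2, (choose1 ψ v).1, (choose1 ψ v).2,
        m1, m2, by simp [choose1, if_pos h]⟩, ?_⟩
      intro χ hχ
      simp only [choose1, if_pos h] at hχ
      rcases hχ with hχ | hχ
      · exact d1 χ hχ
      · exact d2 χ hχ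
    · have hnext : Sat (shift v 1) (LTL.rels φ ψ) := hrest.resolve_left h
      refine ⟨Or.inr ⟨(choose1 ψ v).1, (choose1 ψ v).2, m2, by simp [choose1, if_neg h]⟩, ?_⟩
      intro χ hχ
      simp only [choose1, if_neg h] at hχ
      rcases hχ with hχ | hχ
      · rw [hχ]; exact hnext
      · exact d2 χ hχ
  | ev ψ ih =>
    intro v hs
    by_cases h : Sat v ψ
    · obtain ⟨m2, d2⟩ := ih v h
      refine ⟨Or.inl ⟨(choose1 ψ v).1, (choose1 ψ v).2, m2, by simp [choose1, if_pos h]⟩, ?_⟩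
      simpa [choose1, if_pos h] using d2
    · have hnext : Sat (shift v 1) (LTL.ev ψ) := (sat_ev_iff.1 hs).resolve_left h
      refine ⟨Or.inr (by simp [choose1, if_neg h]), ?_⟩
      intro χ hχ
      simp only [choose1, if_neg h] at hχ
      simp at hχ
      rw [hχ]
      exact hnext
  | alw ψ ih =>
    intro v hs
    have ha := sat_alw_iff.1 hs
    obtain ⟨m2, d2⟩ := ih v ha.1
    refine ⟨⟨(choose1 ψ v).1, (choose1 ψ v).2, m2, by simp [choose1]⟩, ?_⟩
    intro χ hχ
    simp only [choose1] at hχ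
    rcases hχ with hχ | hχ
    · rw [hχ]; exact ha.2
    · exact d2 χ hχ

/-- destinations of `choose1` are the source or strictly smaller. -/
lemma choose1_size : ∀ (ψ : LTL AP) (v : ℕ → Set AP) (χ : LTL AP),
    χ ∈ (choose1 ψ v).2 → χ = ψ ∨ χ.size < ψ.size := by
  intro ψ
  induction ψ with
  | tt => intro v χ h; simp [choose1] at h
  | ff => intro v χ h; simp [choose1] at h
  | atom a => intro v χ h; simp [choose1] at h
  | natom a => intro v χ h; simp [choose1] at h
  | and φ ψ ih1 ih2 =>
    intro v χ h
    rcases h with h | h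
    · exact Or.inr (size_step (ih1 v χ h) (by simp only [LTL.size]; omega))
    · exact Or.inr (size_step (ih2 v χ h) (by simp only [LTL.size]; omega))
  | or φ ψ ih1 ih2 =>
    intro v χ h
    by_cases hc : Sat v φ
    · simp only [choose1, if_pos hc] at h
      exact Or.inr (size_step (ih1 v χ h) (by simp only [LTL.size]; omega))
    · simp only [choose1, if_neg hc] at h
      exact Or.inr (size_step (ih2 v χ h) (by simp only [LTL.size]; omega))
  | next φ ih =>
    intro v χ h
    simp [choose1] at h
    right; rw [h]; simp [LTL.size]
  | untl φ ψ ih1 ih2 =>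
    intro v χ h
    by_cases hc : Sat v ψ
    · simp only [choose1, if_pos hc] at h
      exact Or.inr (size_step (ih2 v χ h) (by simp only [LTL.size]; omega))
    · simp only [choose1, if_neg hc] at h
      rcases h with h | h
      · exact Or.inl h
      · exact Or.inr (size_step (ih1 v χ h) (by simp only [LTL.size]; omega))
  | rels φ ψ ih1 ih2 =>
    intro v χ h
    by_cases hc : Sat v φ
    · simp only [choose1, if_pos hc] at h
      rcases h with h | h
      · exact Or.inr (size_step (ih1 v χ h) (by simp only [LTL.size]; omega))
      · exact Or.inr (size_step (ih2 v χ h) (by simp only [LTL.size]; omega))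
    · simp only [choose1, if_neg hc] at h
      rcases h with h | h
      · exact Or.inl h
      · exact Or.inr (size_step (ih2 v χ h) (by simp only [LTL.size]; omega))
  | ev ψ ih =>
    intro v χ h
    by_cases hc : Sat v ψ
    · simp only [choose1, if_pos hc] at h
      exact Or.inr (size_step (ih v χ h) (by simp only [LTL.size]; omega))
    · simp only [choose1, if_neg hc] at h
      simp at h
      exact Or.inl h
  | alw ψ ih =>
    intro v χ h
    rcases h with h | h
    · exact Or.inl h
    · exact Or.inr (size_step (ih v χ h) (by simp only [LTL.size]; omega))

/-- self-loop classification for `choose1`. -/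
lemma choose1_selfloop : ∀ (ψ : LTL AP) (v : ℕ → Set AP), ψ ∈ (choose1 ψ v).2 →
    (∃ φ1 ψ2, ψ = LTL.untl φ1 ψ2 ∧ ¬ Sat v ψ2) ∨
    (∃ ψ2, ψ = LTL.ev ψ2 ∧ ¬ Sat v ψ2) ∨
    (∃ φ1 ψ2, ψ = LTL.rels φ1 ψ2) ∨ (∃ ψ2, ψ = LTL.alw ψ2) := by
  intro ψ v h
  have hsz := choose1_size ψ v
  cases ψ with
  | tt => simp [choose1] at h
  | ff => simp [choose1] at h
  | atom a => simp [choose1] at h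
  | natom a => simp [choose1] at h
  | and φ1 ψ2 =>
    exfalso
    rcases h with h | h
    · have := choose1_size φ1 v _ h
      have h2 : (φ1.and ψ2).size ≤ φ1.size := by
        rcases this with h' | h'
        · exact le_of_eq (congrArg LTL.size h')
        · omega
      simp [LTL.size] at h2
    · have := choose1_size ψ2 v _ h
      have h2 : (φ1.and ψ2).size ≤ ψ2.size := by
        rcases this with h' | h'
        · exact le_of_eq (congrArg LTL.size h')
        · omega
      simp [LTL.size] at h2
  | or φ1 ψ2 =>
    exfalso
    by_cases hc : Sat v φ1
    · simp only [choose1, if_pos hc] at h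
      have := choose1_size φ1 v _ h
      have h2 : (φ1.or ψ2).size ≤ φ1.size := by
        rcases this with h' | h'
        · exact le_of_eq (congrArg LTL.size h')
        · omega
      simp [LTL.size] at h2
    · simp only [choose1, if_neg hc] at h
      have := choose1_size ψ2 v _ h
      have h2 : (φ1.or ψ2).size ≤ ψ2.size := by
        rcases this with h' | h'
        · exact le_of_eq (congrArg LTL.size h')
        · omega
      simp [LTL.size] at h2
  | next φ1 =>
    exfalso
    simp [choose1] at h
    have : (LTL.next φ1).size = φ1.size := congrArg LTL.size h
    simp [LTL.size] at this
  | untl φ1 ψ2 =>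
    by_cases hc : Sat v ψ2
    · exfalso
      simp only [choose1, if_pos hc] at h
      have := choose1_size ψ2 v _ h
      have h2 : (LTL.untl φ1 ψ2).size ≤ ψ2.size := by
        rcases this with h' | h'
        · exact le_of_eq (congrArg LTL.size h')
        · omega
      simp [LTL.size] at h2
    · exact Or.inl ⟨φ1, ψ2, rfl, hc⟩
  | rels φ1 ψ2 => exact Or.inr (Or.inr (Or.inl ⟨φ1, ψ2, rfl⟩))
  | ev ψ2 =>
    by_cases hc : Sat v ψ2
    · exfalso
      simp only [choose1, if_pos hc] at h
      have := choose1_size ψ2 v _ h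
      have h2 : (LTL.ev ψ2).size ≤ ψ2.size := by
        rcases this with h' | h'
        · exact le_of_eq (congrArg LTL.size h')
        · omega
      simp [LTL.size] at h2
    · exact Or.inr (Or.inl ⟨ψ2, rfl, hc⟩)
  | alw ψ2 => exact Or.inr (Or.inr (Or.inr ⟨ψ2, rfl⟩))

/-- marks of `choose1` at `rels`/`alw` formulae are empty. -/
lemma choose1_marks_rels (φ1 ψ2 : LTL AP) (v : ℕ → Set AP) :
    (choose1 (LTL.rels φ1 ψ2) v).1 = ∅ := by
  by_cases hc : Sat v φ1 <;> simp [choose1, hc]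

lemma choose1_marks_alw (ψ2 : LTL AP) (v : ℕ → Set AP) :
    (choose1 (LTL.alw ψ2) v).1 = ∅ := by
  simp [choose1]

/-- destinations of `choose1` are subformulae of the source. -/
lemma choose1_subs : ∀ (ψ : LTL AP) (v : ℕ → Set AP) (χ : LTL AP),
    χ ∈ (choose1 ψ v).2 → χ ∈ ψ.subs := by
  intro ψ
  induction ψ with
  | tt => intro v χ h; simp [choose1] at h
  | ff => intro v χ h; simp [choose1] at h
  | atom a => intro v χ h; simp [choose1] at h
  | natom a => intro v χ h; simp [choose1] at h
  | and φ ψ ih1 ih2 =>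
    intro v χ h
    simp only [subs, List.mem_cons, List.mem_append]
    rcases h with h | h
    · exact Or.inr (Or.inl (ih1 v χ h))
    · exact Or.inr (Or.inr (ih2 v χ h))
  | or φ ψ ih1 ih2 =>
    intro v χ h
    simp only [subs, List.mem_cons, List.mem_append]
    by_cases hc : Sat v φ
    · simp only [choose1, if_pos hc] at h
      exact Or.inr (Or.inl (ih1 v χ h))
    · simp only [choose1, if_neg hc] at h
      exact Or.inr (Or.inr (ih2 v χ h))
  | next φ ih =>
    intro v χ h
    simp [choose1] at h
    simp only [subs, List.mem_cons]
    exact Or.inr (by rw [h]; exact mem_subs_self φ)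
  | untl φ ψ ih1 ih2 =>
    intro v χ h
    simp only [subs, List.mem_cons, List.mem_append]
    by_cases hc : Sat v ψ
    · simp only [choose1, if_pos hc] at h
      exact Or.inr (Or.inr (ih2 v χ h))
    · simp only [choose1, if_neg hc] at h
      rcases h with h | h
      · exact Or.inl h
      · exact Or.inr (Or.inl (ih1 v χ h))
  | rels φ ψ ih1 ih2 =>
    intro v χ h
    simp only [subs, List.mem_cons, List.mem_append]
    by_cases hc : Sat v φ
    · simp only [choose1, if_pos hc] at h
      rcases h with h | h
      · exact Or.inr (Or.inl (ih1 v χ h))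
      · exact Or.inr (Or.inr (ih2 v χ h))
    · simp only [choose1, if_neg hc] at h
      rcases h with h | h
      · exact Or.inl h
      · exact Or.inr (Or.inr (ih2 v χ h))
  | ev ψ ih =>
    intro v χ h
    simp only [subs, List.mem_cons]
    by_cases hc : Sat v ψ
    · simp only [choose1, if_pos hc] at h
      exact Or.inr (ih v χ h)
    · simp only [choose1, if_neg hc] at h
      simp at h
      exact Or.inl h
  | alw ψ ih =>
    intro v χ h
    simp only [subs, List.mem_cons]
    rcases h with h | h
    · exact Or.inl h
    · exact Or.inr (ih v χ h)

end Dir1c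
section Dir1d

open Classical LTL

variable {AP : Type}

/-- The SLAA for direction 1. -/
def myA (φ : LTL AP) : AltAutomaton (LTL AP) (Set AP) Unit where
  states := φ.subsSet
  alphabet := {α | α ⊆ φ.apSet}
  marks := {()}
  delta := {t | t.src ∈ φ.subsSet ∧ t.lab ⊆ φ.apSet ∧ (t.marks, t.dest) ∈ myDelta t.src t.lab}
  init := φ
  acc := .fin ()

lemma myA_wf (φ : LTL AP) : (myA φ).WellFormed := by
  refine ⟨φ.subsSet_finite, (φ.apSet_finite).finite_subsets, Set.finite_singleton _,
    mem_subs_self φ, ?_, ?_⟩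
  · rintro t ⟨h1, h2, h3⟩
    refine ⟨h1, h2, ?_, ?_⟩
    · intro x _
      cases x
      exact rfl
    · intro x hx
      exact subs_trans φ t.src h1 (myDelta_subs t.src t.lab t.marks t.dest h3 x hx)
  · intro m _
    cases m
    exact rfl

lemma myA_slaa (φ : LTL AP) : (myA φ).IsSLAA := by
  refine ⟨fun x y => x = y ∨ x.size < y.size, ?_, ?_⟩
  · refine { refl := fun x => Or.inl rfl, trans := ?_, antisymm := ?_ }
    · rintro a b c (rfl | h1) (rfl | h2)
      · exact Or.inl rfl
      · exact Or.inr h2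
      · exact Or.inr h1
      · exact Or.inr (lt_trans h1 h2)
    · rintro a b (rfl | h1) (h2 | h2)
      · rfl
      · rfl
      · exact h2.symm
      · omega
  · rintro t ⟨h1, h2, h3⟩ s hs
    exact myDelta_size t.src t.lab t.marks t.dest h3 s hs

/-- Completeness: a satisfied formula has an accepting run. -/
lemma myA_complete {φ : LTL AP} {u : ℕ → Set AP} (hu : ∀ i, u i ⊆ φ.apSet)
    (hsat : Sat u φ) : ∃ ρ, (myA φ).IsAccRun u ρ := by
  classical
  set D : ℕ → Set (LTL AP) :=
    fun j => Nat.rec {φ} (fun j Dj => ⋃ ψ ∈ Dj, (choose1 ψ (shift u j)).2) j with hD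
  have hD0 : D 0 = {φ} := rfl
  have hDs : ∀ j, D (j + 1) = ⋃ ψ ∈ D j, (choose1 ψ (shift u j)).2 := fun j => rfl
  set τ : ℕ → LTL AP → Trans (LTL AP) (Set AP) Unit :=
    fun j ψ => ⟨ψ, u j, (choose1 ψ (shift u j)).1, (choose1 ψ (shift u j)).2⟩ with hτ
  set ρ : ℕ → Set (Trans (LTL AP) (Set AP) Unit) :=
    fun j => {t | ∃ ψ ∈ D j, t = τ j ψ} with hρ
  have hsatD : ∀ j, ∀ ψ ∈ D j, Sat (shift u j) ψ := by
    intro j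
    induction j with
    | zero =>
      intro ψ hψ
      rw [hD0, Set.mem_singleton_iff] at hψ
      rw [hψ, shift_zero]
      exact hsat
    | succ j ih =>
      intro ψ hψ
      rw [hDs j] at hψ
      simp only [Set.mem_iUnion] at hψ
      obtain ⟨χ, hχ, hmem⟩ := hψ
      have := (choose1_spec χ _ (ih χ hχ)).2 ψ hmem
      rwa [shift_succ] at this
  have hsubD : ∀ j, ∀ ψ ∈ D j, ψ ∈ φ.subs := by
    intro j
    induction j with
    | zero =>
      intro ψ hψ
      rw [hD0, Set.mem_singleton_iff] at hψ
      rw [hψ]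
      exact mem_subs_self φ
    | succ j ih =>
      intro ψ hψ
      rw [hDs j] at hψ
      simp only [Set.mem_iUnion] at hψ
      obtain ⟨χ, hχ, hmem⟩ := hψ
      exact subs_trans φ χ (ih χ hχ) (choose1_subs χ _ ψ hmem)
  have hdom : ∀ j, mdom (ρ j) = D j := by
    intro j
    ext ψ
    constructor
    · rintro ⟨t, ⟨χ, hχ, rfl⟩, rfl⟩
      exact hχ
    · intro h
      exact ⟨τ j ψ, ⟨ψ, h, rfl⟩, rfl⟩
  have hrun : (myA φ).IsRun u ρ := by
    refine ⟨by rw [hdom 0, hD0]; rfl, fun j => ⟨?_, ⟨?_, ?_⟩, ?_⟩⟩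
    · rintro t ⟨ψ, hψ, rfl⟩
      refine ⟨hsubD j ψ hψ, hu j, ?_⟩
      have := (choose1_spec ψ _ (hsatD j ψ hψ)).1
      rw [shift_at_zero] at this
      exact this
    · rintro t ⟨ψ, hψ, rfl⟩
      rfl
    · rintro t₁ ⟨ψ₁, h₁, rfl⟩ t₂ ⟨ψ₂, h₂, rfl⟩ hsrc
      simp only [hτ] at hsrc ⊢
      rw [hsrc]
    · rw [hdom (j + 1), hDs j]
      ext x
      constructor
      · rintro ⟨t, ⟨ψ, hψ, rfl⟩, hx⟩
        exact Set.mem_iUnion.2 ⟨ψ, Set.mem_iUnion.2 ⟨hψ, hx⟩⟩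
      · intro hx
        obtain ⟨ψ, hm⟩ := Set.mem_iUnion.1 hx
        obtain ⟨hψ, hx'⟩ := Set.mem_iUnion.1 hm
        exact ⟨τ j ψ, ⟨ψ, hψ, rfl⟩, hx'⟩
  refine ⟨ρ, hrun, ?_⟩
  intro b hb
  have hbj : ∀ j, (b j).src ∈ D j ∧ b j = τ j ((b j).src) := by
    intro j
    obtain ⟨ψ, hψ, heq⟩ := (hb j).1
    have hsrc : (b j).src = ψ := by rw [heq]
    rw [hsrc]
    exact ⟨hψ, heq⟩
  have hchain : ∀ j, (b (j + 1)).src ∈ (choose1 ((b j).src) (shift u j)).2 := by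
    intro j
    have := (hb j).2
    rw [(hbj j).2] at this
    exact this
  have hmono : ∀ j, ((b (j + 1)).src).size ≤ ((b j).src).size := by
    intro j
    rcases choose1_size _ _ _ (hchain j) with h | h
    · rw [h]
    · omega
  obtain ⟨J, _, hJ⟩ := eventually_const (f := fun j => ((b j).src).size) (J0 := 0)
    (fun j _ => hmono j)
  have hconst : ∀ j, J ≤ j → (b j).src = (b J).src := by
    intro j hj
    induction j, hj using Nat.le_induction with
    | base => rfl
    | succ m hm ihm =>
      rcases choose1_size _ _ _ (hchain m) with h | h
      · rw [h, ihm]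
      · exfalso
        have h1 := hJ m hm
        have h2 := hJ (m + 1) (by omega)
        rw [ihm] at h  -- h : size (b (m+1)).src < size (b J).src ... careful
        omega
  set ψ0 := (b J).src with hψ0
  have hloop : ∀ j, J ≤ j → ψ0 ∈ (choose1 ψ0 (shift u j)).2 := by
    intro j hj
    have := hchain j
    rw [hconst j hj, hconst (j + 1) (by omega)] at this
    exact this
  have hsat0 : Sat (shift u J) ψ0 := hsatD J _ (hbj J).1
  simp only [myA, AccFormula.Sat]
  intro hinf
  rcases choose1_selfloop ψ0 (shift u J) (hloop J (le_refl J)) with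
    ⟨φ1, ψ2, hshape, _⟩ | ⟨ψ2, hshape, _⟩ | ⟨φ1, ψ2, hshape⟩ | ⟨ψ2, hshape⟩
  · -- untl: never satisfied in the future, contradiction with satisfaction
    have hnever : ∀ j, J ≤ j → ¬ Sat (shift u j) ψ2 := by
      intro j hj
      rcases choose1_selfloop ψ0 (shift u j) (hloop j hj) with
        ⟨φ1', ψ2', hsh', hns⟩ | ⟨ψ2', hsh', _⟩ | ⟨φ1', ψ2', hsh'⟩ | ⟨ψ2', hsh'⟩
      · rw [hshape] at hsh'
        injection hsh' with h1 h2
        rw [h2]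
        exact hns
      · rw [hshape] at hsh'; exact absurd hsh' (by simp)
      · rw [hshape] at hsh'; exact absurd hsh' (by simp)
      · rw [hshape] at hsh'; exact absurd hsh' (by simp)
    rw [hshape] at hsat0
    obtain ⟨i, hψ2, -⟩ := hsat0
    rw [shift_shift] at hψ2
    exact hnever (i + J) (by omega) hψ2
  · have hnever : ∀ j, J ≤ j → ¬ Sat (shift u j) ψ2 := by
      intro j hj
      rcases choose1_selfloop ψ0 (shift u j) (hloop j hj) with
        ⟨φ1', ψ2', hsh', _⟩ | ⟨ψ2', hsh', hns⟩ | ⟨φ1', ψ2', hsh'⟩ | ⟨ψ2', hsh'⟩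
      · rw [hshape] at hsh'; exact absurd hsh' (by simp)
      · rw [hshape] at hsh'
        injection hsh' with h2
        rw [h2]
        exact hns
      · rw [hshape] at hsh'; exact absurd hsh' (by simp)
      · rw [hshape] at hsh'; exact absurd hsh' (by simp)
    rw [hshape] at hsat0
    obtain ⟨i, hψ2⟩ := hsat0
    rw [shift_shift] at hψ2
    exact hnever (i + J) (by omega) hψ2
  · -- rels: marks empty from J on
    obtain ⟨i, hi, hm⟩ := hinf J
    have : (b i).marks = (choose1 ψ0 (shift u i)).1 := by
      rw [(hbj i).2, ← hconst i hi]
    rw [this, hshape, choose1_marks_rels] at hm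
    exact hm
  · obtain ⟨i, hi, hm⟩ := hinf J
    have : (b i).marks = (choose1 ψ0 (shift u i)).1 := by
      rw [(hbj i).2, ← hconst i hi]
    rw [this, hshape, choose1_marks_alw] at hm
    exact hm

end Dir1d
section Dir1e

open Classical LTL

variable {AP : Type}

lemma myA_sound {φ : LTL AP} {u : ℕ → Set AP} {ρ : ℕ → Set (Trans (LTL AP) (Set AP) Unit)}
    (hacc : (myA φ).IsAccRun u ρ) :
    ∀ N (ψ : LTL AP), ψ.size ≤ N → ∀ n, ψ ∈ mdom (ρ n) → Sat (shift u n) ψ := by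
  have hrun := hacc.1
  have htr : ∀ m (χ : LTL AP), χ ∈ mdom (ρ m) → ∃ t ∈ ρ m, t.src = χ ∧
      (t.marks, t.dest) ∈ myDelta χ (u m) ∧ t.dest ⊆ mdom (ρ (m + 1)) := by
    intro m χ hχ
    obtain ⟨t, ht, hsrc⟩ := hχ
    have hdel := (hrun.2 m).1 ht
    have hlab := (hrun.2 m).2.1.1 t ht
    refine ⟨t, ht, hsrc, ?_, ?_⟩
    · rw [← hsrc, ← hlab]
      exact hdel.2.2
    · intro x hx
      rw [← (hrun.2 m).2.2]
      exact ⟨t, ht, hx⟩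
  intro N
  induction N with
  | zero =>
    intro ψ hψ
    have := size_pos ψ
    omega
  | succ N ih =>
    intro ψ hN n hmem
    have hstep2 : ∀ (χ : LTL AP) m (M : Set Unit) (C : Set (LTL AP)),
        (M, C) ∈ myDelta χ (u m) → C ⊆ mdom (ρ (m + 1)) → (∀ x ∈ C, x.size ≤ N) →
        Sat (shift u m) χ := by
      intro χ m M C hmC hsub hsz
      apply myDelta_sound χ (shift u m) M C (by rw [shift_at_zero]; exact hmC)
      intro x hx
      rw [shift_succ]
      exact ih x (hsz x hx) (m + 1) (hsub hx)
    cases ψ with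
    | tt => trivial
    | ff =>
      obtain ⟨t, ht, hsrc, hmC, hsub⟩ := htr n _ hmem
      simp [myDelta] at hmC
    | atom a =>
      obtain ⟨t, ht, hsrc, hmC, hsub⟩ := htr n _ hmem
      simp [myDelta] at hmC
      show a ∈ shift u n 0
      rw [shift_at_zero]
      exact hmC.2
    | natom a =>
      obtain ⟨t, ht, hsrc, hmC, hsub⟩ := htr n _ hmem
      simp [myDelta] at hmC
      show a ∉ shift u n 0
      rw [shift_at_zero]
      exact hmC.2
    | and φ1 ψ2 =>
      obtain ⟨t, ht, hsrc, hmC, hsub⟩ := htr n _ hmem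
      obtain ⟨M₁, C₁, M₂, C₂, h1, h2, heq⟩ := hmC
      have hsz : ∀ x ∈ t.dest, x.size ≤ N := by
        rw [Prod.mk.injEq] at heq
        rw [heq.2]
        rintro x (hx | hx)
        · have := myDelta_size_le h1 x hx
          simp only [LTL.size] at hN
          omega
        · have := myDelta_size_le h2 x hx
          simp only [LTL.size] at hN
          omega
      exact hstep2 _ n t.marks t.dest ⟨M₁, C₁, M₂, C₂, h1, h2, heq⟩ hsub hsz
    | or φ1 ψ2 =>
      obtain ⟨t, ht, hsrc, hmC, hsub⟩ := htr n _ hmem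
      obtain ⟨M', C', h', heq⟩ := hmC
      have hsz : ∀ x ∈ t.dest, x.size ≤ N := by
        rw [Prod.mk.injEq] at heq
        rw [heq.2]
        intro x hx
        rcases h' with h' | h'
        · have := myDelta_size_le h' x hx
          simp only [LTL.size] at hN
          omega
        · have := myDelta_size_le h' x hx
          simp only [LTL.size] at hN
          omega
      exact hstep2 _ n t.marks t.dest ⟨M', C', h', heq⟩ hsub hsz
    | next φ1 =>
      obtain ⟨t, ht, hsrc, hmC, hsub⟩ := htr n _ hmem
      simp [myDelta] at hmC
      have hφ1 : φ1 ∈ mdom (ρ (n + 1)) := hsub (by rw [hmC.2]; rfl)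
      have := ih φ1 (by simp only [LTL.size] at hN; omega) (n + 1) hφ1
      show Sat (shift (shift u n) 1) φ1
      rwa [shift_succ]
    | untl φ1 ψ2 =>
      -- spine analysis
      set ψ := LTL.untl φ1 ψ2 with hψdef
      have hφ1N : φ1.size ≤ N := by simp only [hψdef, LTL.size] at hN; omega
      have hψ2N : ψ2.size ≤ N := by simp only [hψdef, LTL.size] at hN; omega
      have hnotloop : ∀ m (t : Trans (LTL AP) (Set AP) Unit),
          (t.marks, t.dest) ∈ myDelta ψ (u m) → ψ ∈ t.dest →
          t.marks = {()} ∧ ∃ M C, (M, C) ∈ myDelta φ1 (u m) ∧ t.dest = insert ψ C := by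
        intro m t hmC hloop
        rcases hmC with ⟨M', C', h', heq⟩ | ⟨M', C', h', heq⟩
        · exfalso
          rw [Prod.mk.injEq] at heq
          rw [heq.2] at hloop
          have := myDelta_size_le h' ψ hloop
          simp only [hψdef, LTL.size] at this
          have := size_pos φ1
          omega
        · rw [Prod.mk.injEq] at heq
          exact ⟨heq.1, M', C', h', heq.2⟩
      have hP : ∃ k, ¬ ∃ t ∈ ρ (n + k), t.src = ψ ∧ ψ ∈ t.dest := by
        by_contra hcon
        push_neg at hcon
        choose bt hbt hsrc hdest using hcon
        have hchain : IsChainFrom ρ n bt := by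
          intro k
          exact ⟨hbt k, by rw [hsrc (k + 1)]; exact hdest k⟩
        have hsat := acc_of_chain hacc hchain
        simp only [myA, AccFormula.Sat] at hsat
        apply hsat
        intro K
        refine ⟨K, le_refl K, ?_⟩
        have hdel := (hrun.2 (n + K)).1 (hbt K)
        have hlab := (hrun.2 (n + K)).2.1.1 _ (hbt K)
        have hmC : ((bt K).marks, (bt K).dest) ∈ myDelta ψ (u (n + K)) := by
          rw [← hsrc K, ← hlab]
          exact hdel.2.2
        have := (hnotloop (n + K) (bt K) hmC (hdest K)).1
        rw [this]
        rfl
      set k0 := Nat.find hP with hk0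
      have hloopm : ∀ k, k < k0 → ∃ t ∈ ρ (n + k), t.src = ψ ∧ ψ ∈ t.dest := by
        intro k hk
        have := Nat.find_min hP hk
        push_neg at this
        simpa using this
      have hpres : ∀ k, k ≤ k0 → ψ ∈ mdom (ρ (n + k)) := by
        intro k
        induction k with
        | zero => intro _; exact hmem
        | succ m ihm =>
          intro hmk
          obtain ⟨t, ht, hsrc, hdest⟩ := hloopm m (by omega)
          show ψ ∈ mdom (ρ (n + m + 1))
          rw [← (hrun.2 (n + m)).2.2]
          exact ⟨t, ht, hdest⟩
      -- ψ2 holds at n + k0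
      obtain ⟨t, ht, hsrc, hmC, hsub⟩ := htr (n + k0) ψ (hpres k0 (le_refl _))
      have hnl : ψ ∉ t.dest := by
        intro hcon
        exact Nat.find_spec hP ⟨t, ht, hsrc, hcon⟩
      have hsatψ2 : Sat (shift u (n + k0)) ψ2 := by
        rcases hmC with ⟨M', C', h', heq⟩ | ⟨M', C', h', heq⟩
        · rw [Prod.mk.injEq] at heq
          refine hstep2 ψ2 (n + k0) M' C' h' (by rw [← heq.2]; exact hsub) ?_
          intro x hx
          have := myDelta_size_le h' x hx
          omega
        · exfalso
          rw [Prod.mk.injEq] at heq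
          exact hnl (by rw [heq.2]; exact Set.mem_insert _ _)
      -- φ1 holds at n + k for k < k0
      have hsatφ1 : ∀ k, k < k0 → Sat (shift u (n + k)) φ1 := by
        intro k hk
        obtain ⟨t', ht', hsrc', hmC', hsub'⟩ := htr (n + k) ψ (hpres k (by omega))
        have hloopt : ψ ∈ t'.dest := by
          obtain ⟨t'', ht'', hsrc'', hdest''⟩ := hloopm k hk
          have : t'' = t' := (hrun.2 (n + k)).2.1.2 t'' ht'' t' ht' (by rw [hsrc'', hsrc'])
          rw [← this]
          exact hdest''
        obtain ⟨hmk, M', C', h', hdesteq⟩ := hnotloop (n + k) t' hmC' hloopt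
        refine hstep2 φ1 (n + k) M' C' h' ?_ ?_
        · intro x hx
          exact hsub' (by rw [hdesteq]; exact Set.mem_insert_iff.2 (Or.inr hx))
        · intro x hx
          have := myDelta_size_le h' x hx
          omega
      refine ⟨k0, ?_, ?_⟩
      · rw [shift_shift, Nat.add_comm]
        exact hsatψ2
      · intro j hj
        rw [shift_shift, Nat.add_comm]
        exact hsatφ1 j hj
    | ev ψ2 =>
      set ψ := LTL.ev ψ2 with hψdef
      have hψ2N : ψ2.size ≤ N := by simp only [hψdef, LTL.size] at hN; omega
      have hnotloop : ∀ m (t : Trans (LTL AP) (Set AP) Unit),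
          (t.marks, t.dest) ∈ myDelta ψ (u m) → ψ ∈ t.dest →
          t.marks = {()} := by
        intro m t hmC hloop
        rcases hmC with ⟨M', C', h', heq⟩ | heq
        · exfalso
          rw [Prod.mk.injEq] at heq
          rw [heq.2] at hloop
          have := myDelta_size_le h' ψ hloop
          simp only [hψdef, LTL.size] at this
          omega
        · rw [Prod.mk.injEq] at heq
          exact heq.1
      have hP : ∃ k, ¬ ∃ t ∈ ρ (n + k), t.src = ψ ∧ ψ ∈ t.dest := by
        by_contra hcon
        push_neg at hcon
        choose bt hbt hsrc hdest using hcon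
        have hchain : IsChainFrom ρ n bt := by
          intro k
          exact ⟨hbt k, by rw [hsrc (k + 1)]; exact hdest k⟩
        have hsat := acc_of_chain hacc hchain
        simp only [myA, AccFormula.Sat] at hsat
        apply hsat
        intro K
        refine ⟨K, le_refl K, ?_⟩
        have hdel := (hrun.2 (n + K)).1 (hbt K)
        have hlab := (hrun.2 (n + K)).2.1.1 _ (hbt K)
        have hmC : ((bt K).marks, (bt K).dest) ∈ myDelta ψ (u (n + K)) := by
          rw [← hsrc K, ← hlab]
          exact hdel.2.2
        have := hnotloop (n + K) (bt K) hmC (hdest K)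
        rw [this]
        rfl
      set k0 := Nat.find hP with hk0
      have hloopm : ∀ k, k < k0 → ∃ t ∈ ρ (n + k), t.src = ψ ∧ ψ ∈ t.dest := by
        intro k hk
        have := Nat.find_min hP hk
        push_neg at this
        simpa using this
      have hpres : ∀ k, k ≤ k0 → ψ ∈ mdom (ρ (n + k)) := by
        intro k
        induction k with
        | zero => intro _; exact hmem
        | succ m ihm =>
          intro hmk
          obtain ⟨t, ht, hsrc, hdest⟩ := hloopm m (by omega)
          show ψ ∈ mdom (ρ (n + m + 1))
          rw [← (hrun.2 (n + m)).2.2]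
          exact ⟨t, ht, hdest⟩
      obtain ⟨t, ht, hsrc, hmC, hsub⟩ := htr (n + k0) ψ (hpres k0 (le_refl _))
      have hnl : ψ ∉ t.dest := by
        intro hcon
        exact Nat.find_spec hP ⟨t, ht, hsrc, hcon⟩
      have hsatψ2 : Sat (shift u (n + k0)) ψ2 := by
        rcases hmC with ⟨M', C', h', heq⟩ | heq
        · rw [Prod.mk.injEq] at heq
          refine hstep2 ψ2 (n + k0) M' C' h' (by rw [← heq.2]; exact hsub) ?_
          intro x hx
          have := myDelta_size_le h' x hx
          omega
        · exfalso
          rw [Prod.mk.injEq] at heq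
          exact hnl (by rw [heq.2]; rfl)
      exact ⟨k0, by rw [shift_shift, Nat.add_comm]; exact hsatψ2⟩
    | rels φ1 ψ2 =>
      set ψ := LTL.rels φ1 ψ2 with hψdef
      have hφ1N : φ1.size ≤ N := by simp only [hψdef, LTL.size] at hN; omega
      have hψ2N : ψ2.size ≤ N := by simp only [hψdef, LTL.size] at hN; omega
      have hloopshape : ∀ m (t : Trans (LTL AP) (Set AP) Unit),
          (t.marks, t.dest) ∈ myDelta ψ (u m) → ψ ∈ t.dest →
          ∃ M C, (M, C) ∈ myDelta ψ2 (u m) ∧ t.dest = insert ψ C := by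
        intro m t hmC hloop
        rcases hmC with ⟨M₁, C₁, M₂, C₂, h1, h2, heq⟩ | ⟨M', C', h', heq⟩
        · exfalso
          rw [Prod.mk.injEq] at heq
          rw [heq.2] at hloop
          have := size_pos φ1
          have := size_pos ψ2
          rcases hloop with hl | hl
          · have := myDelta_size_le h1 ψ hl
            simp only [hψdef, LTL.size] at this
            omega
          · have := myDelta_size_le h2 ψ hl
            simp only [hψdef, LTL.size] at this
            omega
        · rw [Prod.mk.injEq] at heq
          exact ⟨M', C', h', heq.2⟩
      have hψ2at : ∀ m (t : Trans (LTL AP) (Set AP) Unit), t ∈ ρ m → t.src = ψ →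
          (t.marks, t.dest) ∈ myDelta ψ (u m) → ψ ∈ t.dest → Sat (shift u m) ψ2 := by
        intro m t ht hsrc hmC hloop
        obtain ⟨M', C', h', hdesteq⟩ := hloopshape m t hmC hloop
        refine hstep2 ψ2 m M' C' h' ?_ ?_
        · intro x hx
          rw [← (hrun.2 m).2.2]
          exact ⟨t, ht, by rw [hdesteq]; exact Set.mem_insert_iff.2 (Or.inr hx)⟩
        · intro x hx
          have := myDelta_size_le h' x hx
          omega
      by_cases hall : ∀ k, ∃ t ∈ ρ (n + k), t.src = ψ ∧ ψ ∈ t.dest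
      · -- loops forever: G ψ2
        refine Or.inr fun i => ?_
        obtain ⟨t, ht, hsrc, hdest⟩ := hall i
        have hdel := (hrun.2 (n + i)).1 ht
        have hlab := (hrun.2 (n + i)).2.1.1 _ ht
        have hmC : (t.marks, t.dest) ∈ myDelta ψ (u (n + i)) := by
          rw [← hsrc, ← hlab]
          exact hdel.2.2
        rw [shift_shift, Nat.add_comm]
        exact hψ2at (n + i) t ht hsrc hmC hdest
      · push_neg at hall
        have hP : ∃ k, ¬ ∃ t ∈ ρ (n + k), t.src = ψ ∧ ψ ∈ t.dest := by
          obtain ⟨k, hk⟩ := hall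
          exact ⟨k, by push_neg; exact hk⟩
        set k0 := Nat.find hP with hk0
        have hloopm : ∀ k, k < k0 → ∃ t ∈ ρ (n + k), t.src = ψ ∧ ψ ∈ t.dest := by
          intro k hk
          have := Nat.find_min hP hk
          push_neg at this
          simpa using this
        have hpres : ∀ k, k ≤ k0 → ψ ∈ mdom (ρ (n + k)) := by
          intro k
          induction k with
          | zero => intro _; exact hmem
          | succ m ihm =>
            intro hmk
            obtain ⟨t, ht, hsrc, hdest⟩ := hloopm m (by omega)
            show ψ ∈ mdom (ρ (n + m + 1))
            rw [← (hrun.2 (n + m)).2.2]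
            exact ⟨t, ht, hdest⟩
        obtain ⟨t, ht, hsrc, hmC, hsub⟩ := htr (n + k0) ψ (hpres k0 (le_refl _))
        have hnl : ψ ∉ t.dest := by
          intro hcon
          exact Nat.find_spec hP ⟨t, ht, hsrc, hcon⟩
        have hboth : Sat (shift u (n + k0)) φ1 ∧ Sat (shift u (n + k0)) ψ2 := by
          rcases hmC with ⟨M₁, C₁, M₂, C₂, h1, h2, heq⟩ | ⟨M', C', h', heq⟩
          · rw [Prod.mk.injEq] at heq
            constructor
            · refine hstep2 φ1 (n + k0) M₁ C₁ h1 ?_ ?_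
              · intro x hx
                exact hsub (by rw [heq.2]; exact Or.inl hx)
              · intro x hx
                have := myDelta_size_le h1 x hx
                omega
            · refine hstep2 ψ2 (n + k0) M₂ C₂ h2 ?_ ?_
              · intro x hx
                exact hsub (by rw [heq.2]; exact Or.inr hx)
              · intro x hx
                have := myDelta_size_le h2 x hx
                omega
          · exfalso
            rw [Prod.mk.injEq] at heq
            exact hnl (by rw [heq.2]; exact Set.mem_insert _ _)
        have hsatψ2m : ∀ k, k < k0 → Sat (shift u (n + k)) ψ2 := by
          intro k hk
          obtain ⟨t', ht', hsrc', hdest'⟩ := hloopm k hk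
          have hdel := (hrun.2 (n + k)).1 ht'
          have hlab := (hrun.2 (n + k)).2.1.1 _ ht'
          have hmC' : (t'.marks, t'.dest) ∈ myDelta ψ (u (n + k)) := by
            rw [← hsrc', ← hlab]
            exact hdel.2.2
          exact hψ2at (n + k) t' ht' hsrc' hmC' hdest'
        refine Or.inl ⟨k0, ?_, ?_⟩
        · rw [shift_shift, Nat.add_comm]
          exact hboth.1
        · intro j hj
          rw [shift_shift, Nat.add_comm]
          rcases Nat.lt_or_ge j k0 with h | h
          · exact hsatψ2m j h
          · have : j = k0 := by omega
            rw [this]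
            exact hboth.2
    | alw ψ2 =>
      set ψ := LTL.alw ψ2 with hψdef
      have hψ2N : ψ2.size ≤ N := by simp only [hψdef, LTL.size] at hN; omega
      have hpres : ∀ k, ψ ∈ mdom (ρ (n + k)) ∧ Sat (shift u (n + k)) ψ2 := by
        intro k
        induction k with
        | zero =>
          refine ⟨hmem, ?_⟩
          obtain ⟨t, ht, hsrc, hmC, hsub⟩ := htr n ψ hmem
          obtain ⟨M', C', h', heq⟩ := hmC
          rw [Prod.mk.injEq] at heq
          refine hstep2 ψ2 n M' C' h' ?_ ?_
          · intro x hx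
            exact hsub (by rw [heq.2]; exact Set.mem_insert_iff.2 (Or.inr hx))
          · intro x hx
            have := myDelta_size_le h' x hx
            omega
        | succ m ihm =>
          obtain ⟨t, ht, hsrc, hmC, hsub⟩ := htr (n + m) ψ ihm.1
          obtain ⟨M', C', h', heq⟩ := hmC
          rw [Prod.mk.injEq] at heq
          have hnext : ψ ∈ mdom (ρ (n + m + 1)) :=
            hsub (by rw [heq.2]; exact Set.mem_insert _ _)
          refine ⟨hnext, ?_⟩
          obtain ⟨t', ht', hsrc', hmC', hsub'⟩ := htr (n + m + 1) ψ hnext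
          obtain ⟨M'', C'', h'', heq'⟩ := hmC'
          rw [Prod.mk.injEq] at heq'
          refine hstep2 ψ2 (n + m + 1) M'' C'' h'' ?_ ?_
          · intro x hx
            exact hsub' (by rw [heq'.2]; exact Set.mem_insert_iff.2 (Or.inr hx))
          · intro x hx
            have := myDelta_size_le h'' x hx
            omega
      intro i
      rw [shift_shift, Nat.add_comm]
      exact (hpres i).2

/-- Language equality for direction 1. -/
lemma myA_lang (φ : LTL AP) : (myA φ).Lang = φ.Lang := by
  ext u
  constructor
  · rintro ⟨halph, ρ, hacc⟩
    refine ⟨halph, ?_⟩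
    have hmem : φ ∈ mdom (ρ 0) := by
      rw [hacc.1.1]
      rfl
    have := myA_sound hacc φ.size φ (le_refl _) 0 hmem
    rwa [shift_zero] at this
  · rintro ⟨hsub, hsat⟩
    exact ⟨hsub, myA_complete hsub hsat⟩

end Dir1e
/-! ### Direction 2: SLAA → LTL -/

section Dir2a

open Classical LTL

variable {AP St Mk : Type}

/-- enumerate a (finite) set as a list. -/
noncomputable def enumList {γ : Type} (S : Set γ) : List γ :=
  if h : S.Finite then h.toFinset.toList else []

lemma mem_enumList {γ : Type} {S : Set γ} (h : S.Finite) {x : γ} :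
    x ∈ enumList S ↔ x ∈ S := by
  simp [enumList, dif_pos h, Set.Finite.mem_toFinset]

lemma enumList_sub {γ : Type} {S : Set γ} {x : γ} (h : x ∈ enumList S) : x ∈ S := by
  by_cases hf : S.Finite
  · exact (mem_enumList hf).1 h
  · simp [enumList, dif_neg hf] at h

/-- filter by a proposition. -/
noncomputable def pfilter {γ : Type} (p : γ → Prop) (l : List γ) : List γ :=
  l.filter (fun a => @decide (p a) (Classical.propDecidable _))

lemma mem_pfilter {γ : Type} {p : γ → Prop} {l : List γ} {a : γ} :
    a ∈ pfilter p l ↔ a ∈ l ∧ p a := by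
  simp only [pfilter, List.mem_filter]
  constructor
  · rintro ⟨h1, h2⟩
    exact ⟨h1, of_decide_eq_true h2⟩
  · rintro ⟨h1, h2⟩
    exact ⟨h1, decide_eq_true h2⟩

lemma pfilter_sublist {γ : Type} (p : γ → Prop) (l : List γ) :
    List.Sublist (pfilter p l) l :=
  List.filter_sublist

lemma getD_idxOf {γ : Type} [DecidableEq γ] {l : List γ} {a : γ} (d : γ) (h : a ∈ l) :
    l.getD (l.idxOf a) d = a := by
  rw [List.getD_eq_getElem?_getD]
  rw [List.getElem?_eq_getElem (List.idxOf_lt_length_iff.2 h)]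
  simp [List.getElem_idxOf]

/-- the formula `φ_α`. -/
noncomputable def letterF (AP' α : Set AP) : LTL AP :=
  bigAndL ((enumList α).map LTL.atom ++ (enumList (AP' \ α)).map LTL.natom)

lemma letterF_apSet {AP' α : Set AP} (hα : α ⊆ AP') : (letterF AP' α).apSet ⊆ AP' := by
  apply apSet_bigAndL
  intro χ hχ
  rw [List.mem_append] at hχ
  rcases hχ with hχ | hχ
  · obtain ⟨a, ha, rfl⟩ := List.mem_map.1 hχ
    intro x hx
    rw [apSet] at hx
    rw [hx]
    exact hα (enumList_sub ha)
  · obtain ⟨a, ha, rfl⟩ := List.mem_map.1 hχ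
    intro x hx
    rw [apSet] at hx
    rw [hx]
    exact (enumList_sub ha).1

lemma letterF_sat {AP' α : Set AP} (hfin : AP'.Finite) (hα : α ⊆ AP') {v : ℕ → Set AP}
    (hv : v 0 ⊆ AP') : Sat v (letterF AP' α) ↔ v 0 = α := by
  have hαfin : α.Finite := hfin.subset hα
  have hdfin : (AP' \ α).Finite := hfin.subset Set.diff_subset
  rw [letterF, sat_bigAndL]
  constructor
  · intro h
    apply Set.eq_of_subset_of_subset
    · intro x hx
      by_contra hxα
      have hmem : LTL.natom x ∈ (enumList α).map LTL.atom ++ (enumList (AP' \ α)).map LTL.natom := by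
        rw [List.mem_append]
        exact Or.inr (List.mem_map.2 ⟨x, (mem_enumList hdfin).2 ⟨hv hx, hxα⟩, rfl⟩)
      exact (h _ hmem) hx
    · intro a ha
      have hmem : LTL.atom a ∈ (enumList α).map LTL.atom ++ (enumList (AP' \ α)).map LTL.natom := by
        rw [List.mem_append]
        exact Or.inl (List.mem_map.2 ⟨a, (mem_enumList hαfin).2 ha, rfl⟩)
      exact h _ hmem
  · intro h χ hχ
    rw [List.mem_append] at hχ
    rcases hχ with hχ | hχ
    · obtain ⟨a, ha, rfl⟩ := List.mem_map.1 hχ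
      show a ∈ v 0
      rw [h]
      exact enumList_sub ha
    · obtain ⟨a, ha, rfl⟩ := List.mem_map.1 hχ
      show a ∉ v 0
      rw [h]
      exact (enumList_sub ha).2

/-- component formula of a transition. -/
noncomputable def compF (AP' : Set AP) (F : St → LTL AP) (s : St)
    (t : Trans St (Set AP) Mk) : LTL AP :=
  LTL.and (letterF AP' t.lab) (LTL.next (bigAndL ((enumList (t.dest \ {s})).map F)))

open Classical in
/-- the formula family of the SLAA-to-LTL translation (indexed by a depth bound). -/
noncomputable def GG (A : AltAutomaton St (Set AP) Mk) (AP' : Set AP) : ℕ → St → LTL AP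
  | 0, _ => LTL.ff
  | (n + 1), s =>
    let comp := compF AP' (GG A AP' n) s
    let loops := pfilter (fun t => t.src = s ∧ s ∈ t.dest) (enumList A.delta)
    let nl := pfilter (fun t => t.src = s ∧ s ∉ t.dest) (enumList A.delta)
    let ψ1 := LTL.untl (bigOrL (loops.map comp)) (bigOrL (nl.map comp))
    let ψ2 := LTL.alw (bigOrL (loops.map comp))
    let ψ3 := bigOrL (loops.sublists.map (fun l =>
        if A.acc.Sat {m | ∃ t ∈ l, m ∈ t.marks} then
          LTL.and (LTL.ev (LTL.alw (bigOrL (l.map comp))))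
            (bigAndL (l.map (fun t => LTL.alw (LTL.ev (comp t)))))
        else LTL.ff))
    LTL.or ψ1 (LTL.and ψ2 ψ3)

/-- acceptance from a given state. -/
def AccFrom (A : AltAutomaton St (Set AP) Mk) (s : St) (v : ℕ → Set AP) : Prop :=
  ∃ ρ, ({ A with init := s } : AltAutomaton St (Set AP) Mk).IsAccRun v ρ

lemma GG_apSet (A : AltAutomaton St (Set AP) Mk) (AP' : Set AP)
    (hlab : ∀ t ∈ A.delta, t.lab ⊆ AP') :
    ∀ n s, (GG A AP' n s).apSet ⊆ AP' := by
  intro n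
  induction n with
  | zero => intro s; simp [GG, apSet]
  | succ n ih =>
    intro s
    have hcomp : ∀ t ∈ enumList A.delta, (compF AP' (GG A AP' n) s t).apSet ⊆ AP' := by
      intro t ht
      have htd := enumList_sub ht
      simp only [compF, apSet]
      apply Set.union_subset
      · exact letterF_apSet (hlab t htd)
      · apply apSet_bigAndL
        intro χ hχ
        obtain ⟨c, hc, rfl⟩ := List.mem_map.1 hχ
        exact ih c
    have hcomp' : ∀ (p : Trans St (Set AP) Mk → Prop) t,
        t ∈ pfilter p (enumList A.delta) → (compF AP' (GG A AP' n) s t).apSet ⊆ AP' :=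
      fun p t ht => hcomp t (mem_pfilter.1 ht).1
    simp only [GG, apSet]
    apply Set.union_subset
    · apply Set.union_subset
      · apply apSet_bigOrL
        intro χ hχ
        obtain ⟨t, ht, rfl⟩ := List.mem_map.1 hχ
        exact hcomp' _ t ht
      · apply apSet_bigOrL
        intro χ hχ
        obtain ⟨t, ht, rfl⟩ := List.mem_map.1 hχ
        exact hcomp' _ t ht
    · apply Set.union_subset
      · apply apSet_bigOrL
        intro χ hχ
        obtain ⟨t, ht, rfl⟩ := List.mem_map.1 hχ
        exact hcomp' _ t ht
      · apply apSet_bigOrL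
        intro χ hχ
        obtain ⟨l, hl, rfl⟩ := List.mem_map.1 hχ
        by_cases hc : A.acc.Sat {m | ∃ t ∈ l, m ∈ t.marks}
        · rw [if_pos hc]
          simp only [apSet]
          apply Set.union_subset
          · apply apSet_bigOrL
            intro χ' hχ'
            obtain ⟨t, ht, rfl⟩ := List.mem_map.1 hχ'
            exact hcomp' _ t ((List.mem_sublists.1 hl).mem ht)
          · apply apSet_bigAndL
            intro χ' hχ'
            obtain ⟨t, ht, rfl⟩ := List.mem_map.1 hχ'
            simp only [apSet]
            exact hcomp' _ t ((List.mem_sublists.1 hl).mem ht)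
        · rw [if_neg hc]
          simp [apSet]

end Dir2a
section Dir2b

open Classical LTL

variable {AP St Mk : Type}

lemma mergeRun (A : AltAutomaton St (Set AP) Mk)
    (le : St → St → Prop)
    (hrefl : ∀ x : St, le x x)
    (htrans : ∀ x y z : St, le x y → le y z → le x z)
    (hanti : ∀ x y : St, le x y → le y x → x = y)
    (hdle : ∀ t ∈ A.delta, ∀ x ∈ t.dest, le x t.src)
    (hstfin : A.states.Finite)
    (hdst : ∀ t ∈ A.delta, t.dest ⊆ A.states)
    (s : St) (v : ℕ → Set AP)
    (spine : ℕ → Trans St (Set AP) Mk) (alive : ℕ → Prop)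
    (h0 : alive 0)
    (hiff : ∀ k, alive (k + 1) ↔ (alive k ∧ s ∈ (spine k).dest))
    (hdel : ∀ k, alive k → spine k ∈ A.delta ∧ (spine k).src = s ∧ (spine k).lab = v k)
    (hchild : ∀ k, alive k → ∀ c, c ∈ (spine k).dest → c ≠ s → AccFrom A c (shift v (k + 1)))
    (hinf : (∀ k, alive k) → A.acc.Sat {m | ∀ N, ∃ k, N ≤ k ∧ m ∈ (spine k).marks}) :
    AccFrom A s v := by
  classical
  haveI := Classical.decEq St
  -- chosen child runs
  let R : ℕ → St → (ℕ → Set (Trans St (Set AP) Mk)) := fun k c =>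
    if h : alive k ∧ c ∈ (spine k).dest ∧ c ≠ s then
      Classical.choose (hchild k h.1 c h.2.1 h.2.2) else fun _ => ∅
  have hR : ∀ k c, alive k → c ∈ (spine k).dest → c ≠ s →
      ({A with init := c} : AltAutomaton St (Set AP) Mk).IsAccRun (shift v (k + 1)) (R k c) := by
    intro k c h1 h2 h3
    have hh : alive k ∧ c ∈ (spine k).dest ∧ c ≠ s := ⟨h1, h2, h3⟩
    have := Classical.choose_spec (hchild k hh.1 c hh.2.1 hh.2.2)
    simp only [R, dif_pos hh]
    exact this
  set stL := enumList A.states with hstL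
  set kOf : ℕ → ℕ := fun p => p.unpair.1 with hkOf
  set cOf : ℕ → St := fun p => stL.getD p.unpair.2 s with hcOf
  set ValidP : ℕ → Prop := fun p =>
    alive (kOf p) ∧ cOf p ∈ (spine (kOf p)).dest ∧ cOf p ≠ s with hValidP
  set Rrun : ℕ → ℕ → Set (Trans St (Set AP) Mk) :=
    fun p j => R (kOf p) (cOf p) (j - (kOf p + 1)) with hRrunDef
  set covers : ℕ → ℕ → St → Prop :=
    fun p j x => ValidP p ∧ kOf p + 1 ≤ j ∧ x ∈ mdom (Rrun p j) with hcovers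
  have hRrun : ∀ p, ValidP p →
      ({A with init := cOf p} : AltAutomaton St (Set AP) Mk).IsAccRun
        (shift v (kOf p + 1)) (R (kOf p) (cOf p)) :=
    fun p hp => hR _ _ hp.1 hp.2.1 hp.2.2
  have hcne : ∀ p, ValidP p → ∀ i x, x ∈ mdom (R (kOf p) (cOf p) i) → x ≠ s := by
    intro p hp i x hx hxs
    have h1 : le x (cOf p) :=
      config_le (A := { A with init := cOf p }) hrefl htrans hdle (hRrun p hp).1 i x hx
    have h2 : le (cOf p) s := by
      have := hdle (spine (kOf p)) (hdel _ hp.1).1 (cOf p) hp.2.1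
      rwa [(hdel _ hp.1).2.1] at this
    rw [hxs] at h1
    exact hp.2.2 (hanti _ _ h2 h1)
  set coverEx : ℕ → St → Prop := fun j x => ∃ p, covers p j x with hcoverEx
  set pmin : ℕ → St → ℕ := fun j x => sInf {p | covers p j x} with hpmindef
  have hpmin_spec : ∀ j x, coverEx j x → covers (pmin j x) j x := by
    intro j x h
    exact Nat.sInf_mem h
  have hpmin_le : ∀ j x q, covers q j x → pmin j x ≤ q :=
    fun j x q hq => Nat.sInf_le hq
  have htrex : ∀ j x, coverEx j x → ∃ t, t ∈ Rrun (pmin j x) j ∧ t.src = x := by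
    intro j x h
    obtain ⟨hv1, hv2, t, ht, hsrc⟩ := hpmin_spec j x h
    exact ⟨t, ht, hsrc⟩
  set τ : ℕ → St → Trans St (Set AP) Mk := fun j x =>
    if hxs : x = s then spine j
    else if h : coverEx j x then Classical.choose (htrex j x h)
    else ⟨x, v j, ∅, ∅⟩ with hτdef
  have hτs : ∀ j, τ j s = spine j := by
    intro j
    simp only [hτdef, dif_pos rfl]
  have hτc : ∀ j x (hxs : x ≠ s) (h : coverEx j x),
      τ j x ∈ Rrun (pmin j x) j ∧ (τ j x).src = x := by
    intro j x hxs h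
    simp only [hτdef, dif_neg hxs, dif_pos h]
    exact Classical.choose_spec (htrex j x h)
  set D : ℕ → Set St := fun j => Nat.rec {s} (fun j Dj => ⋃ x ∈ Dj, (τ j x).dest) j with hDdef
  have hD0 : D 0 = {s} := rfl
  have hDs : ∀ j, D (j + 1) = ⋃ x ∈ D j, (τ j x).dest := fun j => rfl
  -- run facts about child runs
  have hRstep : ∀ p, ValidP p → ∀ i,
      mrange (R (kOf p) (cOf p) i) = mdom (R (kOf p) (cOf p) (i + 1)) :=
    fun p hp i => ((hRrun p hp).1.2 i).2.2
  have hRdelta : ∀ p, ValidP p → ∀ i, R (kOf p) (cOf p) i ⊆ A.delta :=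
    fun p hp i => ((hRrun p hp).1.2 i).1
  have hRlab : ∀ p, ValidP p → ∀ i t, t ∈ R (kOf p) (cOf p) i → t.lab = v (i + (kOf p + 1)) := by
    intro p hp i t ht
    have := ((hRrun p hp).1.2 i).2.1.1 t ht
    rw [this, shift_apply]
  have hRmulti : ∀ p, ValidP p → ∀ i, ∀ t₁ ∈ R (kOf p) (cOf p) i, ∀ t₂ ∈ R (kOf p) (cOf p) i,
      t₁.src = t₂.src → t₁ = t₂ := fun p hp i => ((hRrun p hp).1.2 i).2.1.2
  -- key step: a destination of a covered transition is covered at the next level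
  have hnextcov : ∀ j x (hxs : x ≠ s) (h : coverEx j x) (x' : St),
      x' ∈ (τ j x).dest → x' ≠ s ∧ covers (pmin j x) (j + 1) x' := by
    intro j x hxs h x' hx'
    obtain ⟨hmem, hsrc⟩ := hτc j x hxs h
    obtain ⟨hvp, hkle, hxd⟩ := hpmin_spec j x h
    have hx'r : x' ∈ mrange (Rrun (pmin j x) j) := ⟨τ j x, hmem, hx'⟩
    have harith : (j + 1) - (kOf (pmin j x) + 1) = (j - (kOf (pmin j x) + 1)) + 1 := by
      omega
    have hx'm : x' ∈ mdom (Rrun (pmin j x) (j + 1)) := by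
      show x' ∈ mdom (R (kOf (pmin j x)) (cOf (pmin j x)) ((j + 1) - (kOf (pmin j x) + 1)))
      rw [harith, ← hRstep _ hvp]
      exact hx'r
    exact ⟨hcne _ hvp _ x' hx'm, hvp, by omega, hx'm⟩
  -- invariant
  have hINV : ∀ j, ∀ x ∈ D j, (x = s ∧ alive j) ∨ (x ≠ s ∧ coverEx j x) := by
    intro j
    induction j with
    | zero =>
      intro x hx
      rw [hD0, Set.mem_singleton_iff] at hx
      exact Or.inl ⟨hx, h0⟩
    | succ j ih =>
      intro x' hx'
      rw [hDs j] at hx'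
      simp only [Set.mem_iUnion] at hx'
      obtain ⟨x, hx, hx'dest⟩ := hx'
      rcases ih x hx with ⟨hxeq, halive⟩ | ⟨hxs, hcov⟩
      · rw [hxeq] at hx'dest
        rw [hτs j] at hx'dest
        by_cases hx's : x' = s
        · exact Or.inl ⟨hx's, (hiff j).2 ⟨halive, by rwa [hx's] at hx'dest⟩⟩
        · right
          refine ⟨hx's, Nat.pair j (stL.idxOf x'), ?_⟩
          have hx'st : x' ∈ stL := by
            rw [hstL, mem_enumList hstfin]
            exact hdst (spine j) (hdel j halive).1 hx'dest
          have hcdec : cOf (Nat.pair j (stL.idxOf x')) = x' := by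
            simp only [hcOf, Nat.unpair_pair]
            exact getD_idxOf s hx'st
          have hkdec : kOf (Nat.pair j (stL.idxOf x')) = j := by
            simp only [hkOf, Nat.unpair_pair]
          have hvp : ValidP (Nat.pair j (stL.idxOf x')) := by
            refine ⟨?_, ?_, ?_⟩
            · rw [hkdec]; exact halive
            · rw [hcdec, hkdec]; exact hx'dest
            · rw [hcdec]; exact hx's
          refine ⟨hvp, by rw [hkdec], ?_⟩
          show x' ∈ mdom (Rrun (Nat.pair j (stL.idxOf x')) (j + 1))
          have : Rrun (Nat.pair j (stL.idxOf x')) (j + 1) =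
              R j x' 0 := by
            simp only [hRrunDef, hkdec, hcdec, Nat.sub_self]
          rw [this]
          have hrr := (hR j x' halive hx'dest hx's).1.1
          rw [hrr]
          rfl
      · obtain ⟨hne, hcov'⟩ := hnextcov j x hxs hcov x' hx'dest
        exact Or.inr ⟨hne, _, hcov'⟩
  have hsrcτ : ∀ j x, x ∈ D j → (τ j x).src = x := by
    intro j x hx
    rcases hINV j x hx with ⟨hxeq, halive⟩ | ⟨hxs, hcov⟩
    · rw [hxeq, hτs j]
      exact (hdel j halive).2.1
    · exact (hτc j x hxs hcov).2
  set ρ : ℕ → Set (Trans St (Set AP) Mk) := fun j => {t | ∃ x ∈ D j, t = τ j x} with hρdef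
  have hdom : ∀ j, mdom (ρ j) = D j := by
    intro j
    ext x
    constructor
    · rintro ⟨t, ⟨y, hy, rfl⟩, rfl⟩
      rw [hsrcτ j y hy]
      exact hy
    · intro hx
      exact ⟨τ j x, ⟨x, hx, rfl⟩, hsrcτ j x hx⟩
  have hτdelta : ∀ j x, x ∈ D j → τ j x ∈ A.delta := by
    intro j x hx
    rcases hINV j x hx with ⟨hxeq, halive⟩ | ⟨hxs, hcov⟩
    · rw [hxeq, hτs j]
      exact (hdel j halive).1
    · exact hRdelta _ (hpmin_spec j x hcov).1 _ ((hτc j x hxs hcov).1)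
  have hτlab : ∀ j x, x ∈ D j → (τ j x).lab = v j := by
    intro j x hx
    rcases hINV j x hx with ⟨hxeq, halive⟩ | ⟨hxs, hcov⟩
    · rw [hxeq, hτs j]
      exact (hdel j halive).2.2
    · have hmem := (hτc j x hxs hcov).1
      have hvp := (hpmin_spec j x hcov).1
      have hkle := (hpmin_spec j x hcov).2.1
      have hlabeq := hRlab (pmin j x) hvp (j - (kOf (pmin j x) + 1)) (τ j x) hmem
      rw [hlabeq, show j - (kOf (pmin j x) + 1) + (kOf (pmin j x) + 1) = j from by omega]
  have hrun : ({A with init := s} : AltAutomaton St (Set AP) Mk).IsRun v ρ := by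
    refine ⟨by rw [hdom 0, hD0], fun j => ⟨?_, ⟨?_, ?_⟩, ?_⟩⟩
    · rintro t ⟨x, hx, rfl⟩
      exact hτdelta j x hx
    · rintro t ⟨x, hx, rfl⟩
      exact hτlab j x hx
    · rintro t₁ ⟨x₁, h₁, rfl⟩ t₂ ⟨x₂, h₂, rfl⟩ hsrc
      rw [hsrcτ j x₁ h₁, hsrcτ j x₂ h₂] at hsrc
      rw [hsrc]
    · rw [hdom (j + 1), hDs j]
      ext y
      constructor
      · rintro ⟨t, ⟨x, hx, rfl⟩, hy⟩
        exact Set.mem_iUnion.2 ⟨x, Set.mem_iUnion.2 ⟨hx, hy⟩⟩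
      · intro hy
        obtain ⟨x, hm⟩ := Set.mem_iUnion.1 hy
        obtain ⟨hx, hy'⟩ := Set.mem_iUnion.1 hm
        exact ⟨τ j x, ⟨x, hx, rfl⟩, hy'⟩
  refine ⟨ρ, hrun, ?_⟩
  intro b hb
  have hbj : ∀ j, (b j).src ∈ D j ∧ b j = τ j ((b j).src) := by
    intro j
    obtain ⟨x, hx, heq⟩ := (hb j).1
    have hsx : (b j).src = x := by rw [heq]; exact hsrcτ j x hx
    rw [hsx]
    exact ⟨hx, heq⟩
  by_cases hall : ∀ j, (b j).src = s
  · have halive : ∀ j, alive j := by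
      intro j
      rcases hINV j _ (hbj j).1 with ⟨_, ha⟩ | ⟨hne, _⟩
      · exact ha
      · exact absurd (hall j) hne
    have hbs : ∀ j, b j = spine j := by
      intro j
      rw [(hbj j).2, hall j, hτs j]
    have : infMarks b = {m | ∀ N, ∃ k, N ≤ k ∧ m ∈ (spine k).marks} := by
      ext m
      constructor
      · intro hm N
        obtain ⟨i, hi, hmi⟩ := hm N
        rw [hbs i] at hmi
        exact ⟨i, hi, hmi⟩
      · intro hm N
        obtain ⟨i, hi, hmi⟩ := hm N
        exact ⟨i, hi, by rw [hbs i]; exact hmi⟩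
    show AccFormula.Sat (infMarks b) A.acc
    rw [this]
    exact hinf halive
  · push_neg at hall
    obtain ⟨j0, hj0⟩ := hall
    have hne : ∀ j, j0 ≤ j → (b j).src ≠ s ∧ coverEx j ((b j).src) := by
      intro j hj
      induction j, hj using Nat.le_induction with
      | base =>
        rcases hINV j0 _ (hbj j0).1 with ⟨he, _⟩ | ⟨hne, hcov⟩
        · exact absurd he hj0
        · exact ⟨hne, hcov⟩
      | succ m hm ihm =>
        obtain ⟨hnem, hcovm⟩ := ihm
        have hdest : (b (m + 1)).src ∈ (τ m ((b m).src)).dest := by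
          rw [← (hbj m).2]
          exact (hb m).2
        obtain ⟨hne', hcov'⟩ := hnextcov m _ hnem hcovm _ hdest
        exact ⟨hne', _, hcov'⟩
    set f : ℕ → ℕ := fun j => pmin j ((b j).src) with hfdef
    have hfmono : ∀ j, j0 ≤ j → f (j + 1) ≤ f j := by
      intro j hj
      obtain ⟨hnej, hcovj⟩ := hne j hj
      have hdest : (b (j + 1)).src ∈ (τ j ((b j).src)).dest := by
        rw [← (hbj j).2]
        exact (hb j).2
      have := (hnextcov j _ hnej hcovj _ hdest).2
      exact hpmin_le _ _ _ this
    obtain ⟨J, hJ0, hconstf⟩ := eventually_const hfmono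
    obtain ⟨hneJ, hcovJ⟩ := hne J hJ0
    set p := f J with hpdef
    have hcovp : covers p J ((b J).src) := hpmin_spec J _ hcovJ
    have hvp : ValidP p := hcovp.1
    have hkJ : kOf p + 1 ≤ J := hcovp.2.1
    have hbel : ∀ j, J ≤ j → b j ∈ Rrun p j := by
      intro j hj
      obtain ⟨hnej, hcovj⟩ := hne j (by omega)
      have := (hτc j _ hnej hcovj).1
      rw [← (hbj j).2] at this
      have hfj : f j = p := hconstf j hj
      rw [← hfj]
      exact this
    set b' : ℕ → Trans St (Set AP) Mk := fun i => b (J + i) with hb'def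
    have hchainb : IsChainFrom (R (kOf p) (cOf p)) (J - (kOf p + 1)) b' := by
      intro i
      constructor
      · have := hbel (J + i) (by omega)
        show b' i ∈ R (kOf p) (cOf p) ((J - (kOf p + 1)) + i)
        have harith : (J + i) - (kOf p + 1) = (J - (kOf p + 1)) + i := by omega
        rw [← harith]
        exact this
      · show (b (J + (i + 1))).src ∈ (b (J + i)).dest
        have : J + (i + 1) = (J + i) + 1 := by omega
        rw [this]
        exact (hb (J + i)).2
    have hacc' := acc_of_chain (hRrun p hvp) hchainb
    have heqm : infMarks b = infMarks b' := infMarks_of_tail (fun k => rfl)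
    show AccFormula.Sat (infMarks b) A.acc
    rw [heqm]
    exact hacc'

end Dir2b
section Dir2c

open Classical LTL

variable {AP St Mk : Type}

lemma GG_succ (A : AltAutomaton St (Set AP) Mk) (AP' : Set AP) (n : ℕ) (s : St) :
    GG A AP' (n + 1) s =
    LTL.or
      (LTL.untl
        (bigOrL ((pfilter (fun t => t.src = s ∧ s ∈ t.dest) (enumList A.delta)).map
          (compF AP' (GG A AP' n) s)))
        (bigOrL ((pfilter (fun t => t.src = s ∧ s ∉ t.dest) (enumList A.delta)).map
          (compF AP' (GG A AP' n) s))))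
      (LTL.and
        (LTL.alw (bigOrL ((pfilter (fun t => t.src = s ∧ s ∈ t.dest) (enumList A.delta)).map
          (compF AP' (GG A AP' n) s))))
        (bigOrL ((pfilter (fun t => t.src = s ∧ s ∈ t.dest) (enumList A.delta)).sublists.map
          (fun l =>
            if A.acc.Sat {m | ∃ t ∈ l, m ∈ t.marks} then
              LTL.and (LTL.ev (LTL.alw (bigOrL (l.map (compF AP' (GG A AP' n) s)))))
                (bigAndL (l.map (fun t => LTL.alw (LTL.ev (compF AP' (GG A AP' n) s t)))))
            else LTL.ff)))) := rfl

lemma compF_sat_iff {AP' : Set AP} (hAP'fin : AP'.Finite) (F : St → LTL AP) (s : St)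
    (t : Trans St (Set AP) Mk) (hlab : t.lab ⊆ AP') (hdfin : t.dest.Finite)
    {w : ℕ → Set AP} (hw : w 0 ⊆ AP') :
    Sat w (compF AP' F s t) ↔
      (w 0 = t.lab ∧ ∀ c ∈ t.dest, c ≠ s → Sat (shift w 1) (F c)) := by
  have hdsfin : (t.dest \ {s}).Finite := hdfin.subset Set.diff_subset
  show Sat w (letterF AP' t.lab) ∧ Sat (shift w 1) (bigAndL _) ↔ _
  rw [letterF_sat hAP'fin hlab hw, sat_bigAndL]
  constructor
  · rintro ⟨h1, h2⟩
    refine ⟨h1, fun c hc hcs => ?_⟩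
    exact h2 (F c) (List.mem_map.2 ⟨c, (mem_enumList hdsfin).2 ⟨hc, hcs⟩, rfl⟩)
  · rintro ⟨h1, h2⟩
    refine ⟨h1, fun χ hχ => ?_⟩
    obtain ⟨c, hc, rfl⟩ := List.mem_map.1 hχ
    have := (mem_enumList hdsfin).1 hc
    exact h2 c this.1 this.2

end Dir2c
section Dir2d

open Classical LTL

variable {AP St Mk : Type}

lemma GG_correct (A : AltAutomaton St (Set AP) Mk) (AP' : Set AP)
    (hwf : A.WellFormed)
    (le : St → St → Prop)
    (hrefl : ∀ x : St, le x x)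
    (htrans : ∀ x y z : St, le x y → le y z → le x z)
    (hanti : ∀ x y : St, le x y → le y x → x = y)
    (hdle : ∀ t ∈ A.delta, ∀ x ∈ t.dest, le x t.src)
    (halphEq : A.alphabet = {α | α ⊆ AP'})
    (hAP'fin : AP'.Finite) :
    ∀ n s, ({x | x ∈ A.states ∧ le x s ∧ x ≠ s}).ncard < n →
      ∀ v : ℕ → Set AP, (∀ i, v i ⊆ AP') → (Sat v (GG A AP' n s) ↔ AccFrom A s v) := by
  classical
  have hstfin : A.states.Finite := hwf.1
  have hdfin : A.delta.Finite := delta_finite hwf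
  have hdeltaP := hwf.2.2.2.2.1
  have hlab : ∀ t ∈ A.delta, t.lab ⊆ AP' := by
    intro t ht
    have := (hdeltaP t ht).2.1
    rw [halphEq] at this
    exact this
  have hdst : ∀ t ∈ A.delta, t.dest ⊆ A.states := fun t ht => (hdeltaP t ht).2.2.2
  have hbelowfin : ∀ s : St, ({x | x ∈ A.states ∧ le x s ∧ x ≠ s}).Finite :=
    fun s => hstfin.subset (fun x hx => hx.1)
  intro n
  induction n with
  | zero =>
    intro s h
    exact absurd h (by omega)
  | succ n ih =>
    intro s hcard v hv
    -- induction hypothesis for strictly smaller states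
    have IHc : ∀ c, c ∈ A.states → le c s → c ≠ s →
        ∀ w : ℕ → Set AP, (∀ i, w i ⊆ AP') → (Sat w (GG A AP' n c) ↔ AccFrom A c w) := by
      intro c hcst hlecs hcnes
      apply ih
      have hsub : {x | x ∈ A.states ∧ le x c ∧ x ≠ c} ⊆ {x | x ∈ A.states ∧ le x s ∧ x ≠ s} := by
        rintro x ⟨h1, h2, h3⟩
        refine ⟨h1, htrans _ _ _ h2 hlecs, fun hxe => ?_⟩
        rw [hxe] at h2
        exact hcnes (hanti _ _ hlecs h2)
      have hss : {x | x ∈ A.states ∧ le x c ∧ x ≠ c} ⊂ {x | x ∈ A.states ∧ le x s ∧ x ≠ s} := by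
        refine ⟨hsub, fun hcon => ?_⟩
        exact (hcon ⟨hcst, hlecs, hcnes⟩).2.2 rfl
      have := Set.ncard_lt_ncard hss (hbelowfin s)
      omega
    have hcomp_iff : ∀ (t : Trans St (Set AP) Mk) (j : ℕ), t ∈ A.delta → t.src = s →
        (Sat (shift v j) (compF AP' (GG A AP' n) s t) ↔
          (v j = t.lab ∧ ∀ c ∈ t.dest, c ≠ s → AccFrom A c (shift v (j + 1)))) := by
      intro t j ht hsrc
      have hdestfin : t.dest.Finite := hstfin.subset (hdst t ht)
      rw [compF_sat_iff hAP'fin _ s t (hlab t ht) hdestfin (by rw [shift_at_zero]; exact hv j)]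
      rw [shift_at_zero]
      have hIH : ∀ c ∈ t.dest, c ≠ s →
          (Sat (shift v (j + 1)) (GG A AP' n c) ↔ AccFrom A c (shift v (j + 1))) := by
        intro c hc hcs
        refine IHc c (hdst t ht hc) ?_ hcs _ (fun i => by rw [shift_apply]; exact hv _)
        rw [← hsrc]
        exact hdle t ht c hc
      constructor
      · rintro ⟨h1, h2⟩
        refine ⟨h1, fun c hc hcs => ?_⟩
        have hc1 := h2 c hc hcs
        rw [shift_succ] at hc1
        exact (hIH c hc hcs).1 hc1
      · rintro ⟨h1, h2⟩
        refine ⟨h1, fun c hc hcs => ?_⟩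
        rw [shift_succ]
        exact (hIH c hc hcs).2 (h2 c hc hcs)
    have hmemloops : ∀ t : Trans St (Set AP) Mk,
        t ∈ pfilter (fun t => t.src = s ∧ s ∈ t.dest) (enumList A.delta) ↔
        (t ∈ A.delta ∧ t.src = s ∧ s ∈ t.dest) := by
      intro t
      rw [mem_pfilter, mem_enumList hdfin]
    have hmemnl : ∀ t : Trans St (Set AP) Mk,
        t ∈ pfilter (fun t => t.src = s ∧ s ∉ t.dest) (enumList A.delta) ↔
        (t ∈ A.delta ∧ t.src = s ∧ s ∉ t.dest) := by
      intro t
      rw [mem_pfilter, mem_enumList hdfin]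
    rw [GG_succ]
    constructor
    · -- formula → accepting run
      rintro (h1 | ⟨h2, h3⟩)
      · -- ψ1: finite spine
        obtain ⟨j0, hNo, hLo⟩ := h1
        rw [sat_bigOrL] at hNo
        obtain ⟨χ, hχm, hχs⟩ := hNo
        obtain ⟨t, htm, rfl⟩ := List.mem_map.1 hχm
        obtain ⟨htd, htsrc, htnl⟩ := (hmemnl t).1 htm
        have ht0 := (hcomp_iff t j0 htd htsrc).1 hχs
        have hLo' : ∀ k, k < j0 → ∃ t', (t' ∈ A.delta ∧ t'.src = s ∧ s ∈ t'.dest) ∧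
            v k = t'.lab ∧ ∀ c ∈ t'.dest, c ≠ s → AccFrom A c (shift v (k + 1)) := by
          intro k hk
          have hlk := hLo k hk
          rw [sat_bigOrL] at hlk
          obtain ⟨χ', hχm', hχs'⟩ := hlk
          obtain ⟨t', ht'm, rfl⟩ := List.mem_map.1 hχm'
          obtain ⟨ht'd, ht'src, ht'l⟩ := (hmemloops t').1 ht'm
          have := (hcomp_iff t' k ht'd ht'src).1 hχs'
          exact ⟨t', ⟨ht'd, ht'src, ht'l⟩, this.1, this.2⟩
        set spine : ℕ → Trans St (Set AP) Mk :=
          fun k => if h : k < j0 then Classical.choose (hLo' k h) else t with hspinedef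
        have hspinelt : ∀ k (h : k < j0), spine k = Classical.choose (hLo' k h) :=
          fun k h => dif_pos h
        have hspinege : ∀ k, j0 ≤ k → spine k = t := fun k h => dif_neg (by omega)
        apply mergeRun A le hrefl htrans hanti hdle hstfin hdst s v spine (fun k => k ≤ j0)
        · omega
        · intro k
          constructor
          · intro hk1
            have hklt : k < j0 := by omega
            refine ⟨by omega, ?_⟩
            rw [hspinelt k hklt]
            exact (Classical.choose_spec (hLo' k hklt)).1.2.2
          · rintro ⟨hk, hsd⟩
            rcases Nat.lt_or_ge k j0 with h | h
            · omega
            · exfalso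
              rw [hspinege k h] at hsd
              exact htnl hsd
        · intro k hk
          rcases Nat.lt_or_ge k j0 with h | h
          · rw [hspinelt k h]
            obtain ⟨⟨hd, hsrc, hl⟩, hlab', hch⟩ := Classical.choose_spec (hLo' k h)
            exact ⟨hd, hsrc, hlab'.symm⟩
          · have hk0 : k = j0 := by omega
            subst hk0
            rw [hspinege k h]
            exact ⟨htd, htsrc, ht0.1.symm⟩
        · intro k hk c hc hcs
          rcases Nat.lt_or_ge k j0 with h | h
          · rw [hspinelt k h] at hc
            exact (Classical.choose_spec (hLo' k h)).2.2 c hc hcs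
          · have hk0 : k = j0 := by omega
            subst hk0
            rw [hspinege k h] at hc
            exact ht0.2 c hc hcs
        · intro hallk
          exact absurd (hallk (j0 + 1)) (by omega)
      · -- ψ2 ∧ ψ3: infinite spine with scheduling
        rw [sat_bigOrL] at h3
        obtain ⟨χ, hχm, hχs⟩ := h3
        obtain ⟨l, hlm, rfl⟩ := List.mem_map.1 hχm
        by_cases hcond : A.acc.Sat {m | ∃ t ∈ l, m ∈ t.marks}
        case neg =>
          rw [if_neg hcond] at hχs
          exact absurd hχs (by simp [Sat])
        rw [if_pos hcond] at hχs
        obtain ⟨hFG, hGF⟩ := hχs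
        obtain ⟨N, hN⟩ := hFG
        have hNlist : ∀ j, N ≤ j →
            ∃ t, t ∈ l ∧ Sat (shift v j) (compF AP' (GG A AP' n) s t) := by
          intro j hj
          have hsatj := hN (j - N)
          rw [shift_shift, show j - N + N = j by omega] at hsatj
          rw [sat_bigOrL] at hsatj
          obtain ⟨χ', hχm', hχs'⟩ := hsatj
          obtain ⟨t, htm', rfl⟩ := List.mem_map.1 hχm'
          exact ⟨t, htm', hχs'⟩
        have hGF' : ∀ t ∈ l, ∀ M, ∃ j, M ≤ j ∧
            Sat (shift v j) (compF AP' (GG A AP' n) s t) := by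
          intro t ht M
          have hsat := (sat_bigAndL.1 hGF) _ (List.mem_map.2 ⟨t, ht, rfl⟩)
          obtain ⟨k, hk⟩ := hsat M
          rw [shift_shift] at hk
          exact ⟨k + M, by omega, hk⟩
        have hlsub : ∀ t ∈ l, t ∈ A.delta ∧ t.src = s ∧ s ∈ t.dest :=
          fun t ht => (hmemloops t).1 ((List.mem_sublists.1 hlm).mem ht)
        have hany : ∀ j, ∃ t, (t ∈ A.delta ∧ t.src = s ∧ s ∈ t.dest) ∧
            Sat (shift v j) (compF AP' (GG A AP' n) s t) := by
          intro j
          have hsatj := h2 j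
          rw [sat_bigOrL] at hsatj
          obtain ⟨χ', hχm', hχs'⟩ := hsatj
          obtain ⟨t, htm', rfl⟩ := List.mem_map.1 hχm'
          exact ⟨t, (hmemloops t).1 htm', hχs'⟩
        have hlpos : 0 < l.length := by
          obtain ⟨t, ht, _⟩ := hNlist N (le_refl N)
          exact List.length_pos_iff.2 (List.ne_nil_of_mem ht)
        set dflt : Trans St (Set AP) Mk := ⟨s, v 0, ∅, ∅⟩ with hdflt
        have hgetDmem : ∀ q : ℕ, l.getD (q % l.length) dflt ∈ l := by
          intro q
          rw [List.getD_eq_getElem?_getD, List.getElem?_eq_getElem (Nat.mod_lt _ hlpos)]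
          simp only [Option.getD_some]
          exact List.getElem_mem _
        set g : ℕ → ℕ := fun j => Nat.rec 0 (fun j gj =>
          if N ≤ j ∧ Sat (shift v j) (compF AP' (GG A AP' n) s (l.getD (gj % l.length) dflt))
          then gj + 1 else gj) j with hgdef
        have hgs : ∀ j, g (j + 1) =
            if N ≤ j ∧ Sat (shift v j) (compF AP' (GG A AP' n) s (l.getD (g j % l.length) dflt))
            then g j + 1 else g j := fun j => rfl
        have hfirst : ∀ M, ∃ j, M ≤ j ∧ g j = g M ∧ g (j + 1) = g j + 1 := by
          intro M
          by_contra hcon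
          push_neg at hcon
          have hconst : ∀ j, M ≤ j → g j = g M := by
            intro j hj
            induction j, hj using Nat.le_induction with
            | base => rfl
            | succ m hm ihm =>
              rw [hgs m]
              split
              · exact absurd (by rw [hgs m, if_pos (by assumption)]) (hcon m hm ihm)
              · exact ihm
          obtain ⟨j, hj, hsatj⟩ := hGF' _ (hgetDmem (g M)) (max M N)
          have hgj : g j = g M := hconst j (by omega)
          have hinc : g (j + 1) = g j + 1 := by
            rw [hgs j, if_pos ⟨by omega, by rw [hgj]; exact hsatj⟩]
          exact hcon j (by omega) hgj hinc
        have hcross : ∀ M V, g M ≤ V → ∃ j, M ≤ j ∧ g j = V ∧ g (j + 1) = g j + 1 := by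
          intro M V hV
          induction V, hV using Nat.le_induction with
          | base => exact hfirst M
          | succ V hV ihV =>
            obtain ⟨j, hj, hgj, hinc⟩ := ihV
            obtain ⟨j2, hj2, hgj2, hinc2⟩ := hfirst (j + 1)
            refine ⟨j2, by omega, ?_, hinc2⟩
            rw [hgj2, hinc, hgj]
        set spine : ℕ → Trans St (Set AP) Mk := fun j =>
          if h : N ≤ j ∧ Sat (shift v j) (compF AP' (GG A AP' n) s (l.getD (g j % l.length) dflt))
          then l.getD (g j % l.length) dflt
          else if h2 : N ≤ j then Classical.choose (hNlist j h2)
          else Classical.choose (hany j) with hspinedef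
        have hspineP : ∀ j, (spine j ∈ A.delta ∧ (spine j).src = s ∧ s ∈ (spine j).dest) ∧
            Sat (shift v j) (compF AP' (GG A AP' n) s (spine j)) ∧ (N ≤ j → spine j ∈ l) := by
          intro j
          by_cases h : N ≤ j ∧ Sat (shift v j) (compF AP' (GG A AP' n) s (l.getD (g j % l.length) dflt))
          · have hsp : spine j = l.getD (g j % l.length) dflt := dif_pos h
            rw [hsp]
            exact ⟨hlsub _ (hgetDmem (g j)), h.2, fun _ => hgetDmem (g j)⟩
          · by_cases h2 : N ≤ j
            · have hsp : spine j = Classical.choose (hNlist j h2) := by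
                rw [hspinedef]
                simp only [dif_neg h, dif_pos h2]
              obtain ⟨hm, hs⟩ := Classical.choose_spec (hNlist j h2)
              rw [hsp]
              exact ⟨hlsub _ hm, hs, fun _ => hm⟩
            · have hsp : spine j = Classical.choose (hany j) := by
                rw [hspinedef]
                simp only [dif_neg h, dif_neg h2]
              obtain ⟨hp, hs⟩ := Classical.choose_spec (hany j)
              rw [hsp]
              exact ⟨hp, hs, fun hn => absurd hn h2⟩
        have hP3 : ∀ t ∈ l, ∀ M, ∃ j, M ≤ j ∧ spine j = t := by
          intro t ht M
          haveI := Classical.decEq (Trans St (Set AP) Mk)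
          have hilt : l.idxOf t < l.length := List.idxOf_lt_length_iff.2 ht
          set V := (g M / l.length + 1) * l.length + l.idxOf t with hVdef
          have h3 : g M < (g M / l.length + 1) * l.length := by
            have hdm := Nat.div_add_mod (g M) l.length
            have hml := Nat.mod_lt (g M) hlpos
            calc g M = l.length * (g M / l.length) + g M % l.length := hdm.symm
              _ < l.length * (g M / l.length) + l.length := by omega
              _ = (g M / l.length + 1) * l.length := by ring
          have hVge : g M ≤ V :=
            le_trans (Nat.le_of_lt h3) (Nat.le_add_right _ _)
          have hVmod : V % l.length = l.idxOf t := by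
            rw [hVdef, Nat.mul_comm (g M / l.length + 1) l.length, Nat.mul_add_mod, Nat.mod_eq_of_lt hilt]
          obtain ⟨j, hj, hgj, hinc⟩ := hcross M V hVge
          have hcondj : N ≤ j ∧
              Sat (shift v j) (compF AP' (GG A AP' n) s (l.getD (g j % l.length) dflt)) := by
            by_contra hconj
            rw [hgs j, if_neg hconj] at hinc
            omega
          have hspj : spine j = l.getD (g j % l.length) dflt := dif_pos hcondj
          refine ⟨j, hj, ?_⟩
          rw [hspj, hgj, hVmod]
          exact getD_idxOf dflt ht
        apply mergeRun A le hrefl htrans hanti hdle hstfin hdst s v spine (fun _ => True)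
        · trivial
        · intro k
          exact iff_of_true trivial ⟨trivial, (hspineP k).1.2.2⟩
        · intro k _
          obtain ⟨⟨hd, hsrc, _⟩, hsat, _⟩ := hspineP k
          have := (hcomp_iff (spine k) k hd hsrc).1 hsat
          exact ⟨hd, hsrc, this.1.symm⟩
        · intro k _ c hc hcs
          obtain ⟨⟨hd, hsrc, _⟩, hsat, _⟩ := hspineP k
          exact ((hcomp_iff (spine k) k hd hsrc).1 hsat).2 c hc hcs
        · intro _
          have hseteq : {m | ∀ N', ∃ k, N' ≤ k ∧ m ∈ (spine k).marks} =
              {m | ∃ t ∈ l, m ∈ t.marks} := by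
            ext m
            constructor
            · intro hm
              obtain ⟨k, hk, hmk⟩ := hm N
              exact ⟨spine k, (hspineP k).2.2 hk, hmk⟩
            · rintro ⟨t, ht, hmt⟩ N'
              obtain ⟨j, hj, hsj⟩ := hP3 t ht N'
              exact ⟨j, hj, by rw [hsj]; exact hmt⟩
          rw [hseteq]
          exact hcond
    · -- accepting run → formula
      rintro ⟨ρ, hacc⟩
      have hrun := hacc.1
      have hconfle : ∀ k, ∀ x ∈ mdom (ρ k), le x s :=
        config_le (A := { A with init := s }) hrefl htrans hdle hrun
      have hlabρ : ∀ k, ∀ t ∈ ρ k, t.lab = v k := fun k => (hrun.2 k).2.1.1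
      have hdeltaρ : ∀ k, ∀ t ∈ ρ k, t ∈ A.delta := fun k => (hrun.2 k).1
      have hcompsat : ∀ k (t : Trans St (Set AP) Mk), t ∈ ρ k → t.src = s →
          Sat (shift v k) (compF AP' (GG A AP' n) s t) := by
        intro k t ht hsrc
        rw [hcomp_iff t k (hdeltaρ k t ht) hsrc]
        refine ⟨(hlabρ k t ht).symm, fun c hc hcs => ?_⟩
        have hcm : c ∈ mdom (ρ (k + 1)) := by
          rw [← (hrun.2 k).2.2]
          exact ⟨t, ht, hc⟩
        obtain ⟨ρ', hρ'⟩ := subrun hacc hcm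
        exact ⟨ρ', hρ'⟩
      have hstep : ∀ k, s ∈ mdom (ρ (k + 1)) →
          ∃ t ∈ ρ k, t.src = s ∧ s ∈ t.dest := by
        intro k hk
        rw [← (hrun.2 k).2.2] at hk
        obtain ⟨t, ht, hsd⟩ := hk
        have h1 : le s t.src := hdle t (hdeltaρ k t ht) s hsd
        have h2 : le t.src s := hconfle k t.src ⟨t, ht, rfl⟩
        exact ⟨t, ht, hanti _ _ h2 h1, hsd⟩
      by_cases hall : ∀ k, ∃ t ∈ ρ k, t.src = s ∧ s ∈ t.dest
      · -- loops forever : ψ2 ∧ ψ3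
        choose bt hbt hsrcb hdestb using hall
        right
        have hbtloop : ∀ k, bt k ∈ pfilter (fun t => t.src = s ∧ s ∈ t.dest) (enumList A.delta) :=
          fun k => (hmemloops _).2 ⟨hdeltaρ k _ (hbt k), hsrcb k, hdestb k⟩
        have hcompb : ∀ k, Sat (shift v k) (compF AP' (GG A AP' n) s (bt k)) :=
          fun k => hcompsat k (bt k) (hbt k) (hsrcb k)
        constructor
        · -- ψ2
          intro j
          rw [sat_bigOrL]
          exact ⟨_, List.mem_map.2 ⟨bt j, hbtloop j, rfl⟩, hcompb j⟩
        · -- ψ3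
          set l' := pfilter (fun t => ∀ N, ∃ j, N ≤ j ∧ bt j = t)
            (pfilter (fun t => t.src = s ∧ s ∈ t.dest) (enumList A.delta)) with hl'def
          have hl'mem : ∀ t, t ∈ l' ↔
              (t ∈ pfilter (fun t => t.src = s ∧ s ∈ t.dest) (enumList A.delta) ∧
               ∀ N, ∃ j, N ≤ j ∧ bt j = t) := fun t => mem_pfilter
          -- eventually all spine transitions are in l'
          have hbnd : ∀ lst : List (Trans St (Set AP) Mk), ∃ Jb : ℕ, ∀ t' ∈ lst,
              ¬ (∀ N, ∃ j, N ≤ j ∧ bt j = t') → ∀ j, Jb ≤ j → bt j ≠ t' := by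
            intro lst
            induction lst with
            | nil => exact ⟨0, by simp⟩
            | cons a lst ihl =>
              obtain ⟨Jb, hJb⟩ := ihl
              by_cases ha : ∀ N, ∃ j, N ≤ j ∧ bt j = a
              · refine ⟨Jb, fun t' ht' hnt' j hj => ?_⟩
                rcases List.mem_cons.1 ht' with rfl | ht''
                · exact absurd ha hnt'
                · exact hJb t' ht'' hnt' j hj
              · push_neg at ha
                obtain ⟨Na, hNa⟩ := ha
                refine ⟨max Jb Na, fun t' ht' hnt' j hj => ?_⟩
                rcases List.mem_cons.1 ht' with rfl | ht''
                · exact hNa j (by omega)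
                · exact hJb t' ht'' hnt' j (by omega)
          obtain ⟨Jb, hJb⟩ := hbnd (pfilter (fun t => t.src = s ∧ s ∈ t.dest) (enumList A.delta))
          have hinl' : ∀ j, Jb ≤ j → bt j ∈ l' := by
            intro j hj
            rw [hl'mem]
            refine ⟨hbtloop j, ?_⟩
            by_contra hcon
            exact hJb (bt j) (hbtloop j) hcon j hj rfl
          -- the spine is an infinite branch
          have hbranch : IsInfBranch ρ bt := by
            intro k
            exact ⟨hbt k, by rw [hsrcb (k + 1)]; exact hdestb k⟩
          have haccb := hacc.2 bt hbranch
          have hmarks : infMarks bt = {m | ∃ t ∈ l', m ∈ t.marks} := by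
            ext m
            constructor
            · intro hm
              obtain ⟨j, hj, hmj⟩ := hm Jb
              exact ⟨bt j, hinl' j hj, hmj⟩
            · rintro ⟨t, ht, hmt⟩ N
              obtain ⟨j, hj, hbj⟩ := ((hl'mem t).1 ht).2 N
              exact ⟨j, hj, by rw [hbj]; exact hmt⟩
          rw [sat_bigOrL]
          refine ⟨_, List.mem_map.2 ⟨l', List.mem_sublists.2 (pfilter_sublist _ _), rfl⟩, ?_⟩
          rw [if_pos (by rw [← hmarks]; exact haccb)]
          constructor
          · -- FG
            refine ⟨Jb, fun k => ?_⟩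
            rw [shift_shift, sat_bigOrL]
            exact ⟨_, List.mem_map.2 ⟨bt (k + Jb), hinl' (k + Jb) (by omega), rfl⟩,
              hcompb (k + Jb)⟩
          · -- GF conjuncts
            rw [sat_bigAndL]
            intro χ hχ
            obtain ⟨t, ht, rfl⟩ := List.mem_map.1 hχ
            intro i
            obtain ⟨j, hj, hbj⟩ := ((hl'mem t).1 ht).2 i
            refine ⟨j - i, ?_⟩
            rw [shift_shift, show j - i + i = j by omega, ← hbj]
            exact hcompb j
      · -- escapes : ψ1
        push_neg at hall
        have hP : ∃ k, ¬ ∃ t ∈ ρ k, t.src = s ∧ s ∈ t.dest := by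
          obtain ⟨k, hk⟩ := hall
          exact ⟨k, by push_neg; exact hk⟩
        left
        set k0 := Nat.find hP with hk0
        have hloopm : ∀ k, k < k0 → ∃ t ∈ ρ k, t.src = s ∧ s ∈ t.dest := by
          intro k hk
          have := Nat.find_min hP hk
          push_neg at this
          simpa using this
        have hpres : ∀ k, k ≤ k0 → s ∈ mdom (ρ k) := by
          intro k
          induction k with
          | zero => intro _; rw [hrun.1]; rfl
          | succ m ihm =>
            intro hmk
            obtain ⟨t, ht, hsrc, hdest⟩ := hloopm m (by omega)
            rw [← (hrun.2 m).2.2]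
            exact ⟨t, ht, hdest⟩
        obtain ⟨t, ht, hsrct⟩ := hpres k0 (le_refl _)
        have hnl : s ∉ t.dest := fun hcon => Nat.find_spec hP ⟨t, ht, hsrct, hcon⟩
        refine ⟨k0, ?_, ?_⟩
        · rw [sat_bigOrL]
          exact ⟨_, List.mem_map.2 ⟨t, (hmemnl t).2 ⟨hdeltaρ k0 t ht, hsrct, hnl⟩, rfl⟩,
            hcompsat k0 t ht hsrct⟩
        · intro j hj
          obtain ⟨t', ht', hsrct', hdestt'⟩ := hloopm j hj
          rw [sat_bigOrL]
          exact ⟨_, List.mem_map.2 ⟨t', (hmemloops t').2 ⟨hdeltaρ j t' ht', hsrct', hdestt'⟩, rfl⟩,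
            hcompsat j t' ht' hsrct'⟩

end Dir2d
/-- LTL and SLAA with alphabets of the form `2^{AP'}` have the
same expressive power: every LTL formula `φ` has an equivalent SLAA over the
alphabet `2^{AP(φ)}`, and every SLAA over an alphabet `2^{AP'}` has an
equivalent LTL formula over `AP'`. -/
theorem ltl_slaa_expressive_equivalence {AP : Type} :
    (∀ φ : LTL AP, ∃ (St Mk : Type) (A : AltAutomaton St (Set AP) Mk),
      A.WellFormed ∧ A.IsSLAA ∧ A.alphabet = {α | α ⊆ φ.apSet} ∧
      A.Lang = φ.Lang) ∧
    (∀ (St Mk : Type) (A : AltAutomaton St (Set AP) Mk) (AP' : Set AP),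
      A.WellFormed → A.IsSLAA → A.alphabet = {α | α ⊆ AP'} →
      ∃ φ : LTL AP, φ.apSet ⊆ AP' ∧
        {u | (∀ i, u i ∈ A.alphabet) ∧ φ.Sat u} = A.Lang) := by
  constructor
  · intro φ
    exact ⟨LTL AP, Unit, myA φ, myA_wf φ, myA_slaa φ, rfl, myA_lang φ⟩
  · intro St Mk A AP' hwf hslaa halph
    obtain ⟨le, hpo, hdle⟩ := hslaa
    have hrefl := hpo.toIsPreorder.toRefl.refl
    have htrans := hpo.toIsPreorder.toIsTrans.trans
    have hanti := hpo.toAntisymm.antisymm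
    have hstfin := hwf.1
    have hlab : ∀ t ∈ A.delta, t.lab ⊆ AP' := by
      intro t ht
      have := (hwf.2.2.2.2.1 t ht).2.1
      rwa [halph] at this
    have hsing : (fun a => ({a} : Set AP)) '' AP' ⊆ A.alphabet := by
      rintro _ ⟨a, ha, rfl⟩
      rw [halph]
      intro x hx
      rw [Set.mem_singleton_iff] at hx
      rw [hx]
      exact ha
    have hAP'fin : AP'.Finite :=
      Set.Finite.of_finite_image (hwf.2.1.subset hsing)
        (fun a _ b _ h => by simpa [Set.singleton_eq_singleton_iff] using h)
    refine ⟨GG A AP' (A.states.ncard + 1) A.init, GG_apSet A AP' hlab _ _, ?_⟩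
    have hcard : ({x | x ∈ A.states ∧ le x A.init ∧ x ≠ A.init}).ncard <
        A.states.ncard + 1 := by
      have := Set.ncard_le_ncard (fun x (hx : x ∈ {x | x ∈ A.states ∧ le x A.init ∧ x ≠ A.init}) => hx.1) hstfin
      omega
    ext u
    simp only [Set.mem_setOf_eq, AltAutomaton.Lang]
    constructor
    · rintro ⟨halphu, hsat⟩
      refine ⟨halphu, ?_⟩
      have hu' : ∀ i, u i ⊆ AP' := fun i => by
        have := halphu i
        rwa [halph] at this
      have := (GG_correct A AP' hwf le hrefl htrans hanti hdle halph hAP'fin _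
        A.init hcard u hu').1 hsat
      obtain ⟨ρ, hρ⟩ := this
      exact ⟨ρ, by
        rwa [show ({A with init := A.init} : AltAutomaton St (Set AP) Mk) = A from rfl] at hρ⟩
    · rintro ⟨halphu, ρ, hρ⟩
      refine ⟨halphu, ?_⟩
      have hu' : ∀ i, u i ⊆ AP' := fun i => by
        have := halphu i
        rwa [halph] at this
      refine (GG_correct A AP' hwf le hrefl htrans hanti hdle halph hAP'fin _
        A.init hcard u hu').2 ⟨ρ, ?_⟩
      rwa [show ({A with init := A.init} : AltAutomaton St (Set AP) Mk) = A from rfl]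

end SLAA
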